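/- arXiv:2601.12165 — 7 statements merged into one kernel-verified Lean document; each statement's English description precedes it below -/
import Mathlib

section
/- Let λ, α be weakly increasing tuples of length k of nonnegative integers and σ a permutation of {1,…,k}. Define (λ+α)_σ as the weakly increasing rearrangement of the tuple (λ_1 + α_{σ(1)}, …, λ_k + α_{σ(k)}). Then (λ+α)_σ ⪯ λ + α in dominance order. -/
/-- Dominance order on tuples: all tail sums of `μ` are at most those of `lam`. -/
def DominatedBy {k : ℕ} (μ lam : Fin k → ℕ) : Prop :=
  ∀ i : Fin k, ∑ j ∈ Finset.Ici i, μ j ≤ ∑ j ∈ Finset.Ici i, lam j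

lemma aux_strictMono_gap {m : ℕ} (h : Fin m → ℕ) (hh : StrictMono h) :
    ∀ d (a b : Fin m), b.val = a.val + d → h a + d ≤ h b := by
  intro d
  induction d with
  | zero =>
    intro a b hb
    have : a = b := Fin.ext (by omega)
    subst this; simp
  | succ d ih =>
    intro a b hb
    have hb' : a.val + d < m := by omega
    have h1 := ih a ⟨a.val + d, hb'⟩ rfl
    have h2 : h ⟨a.val + d, hb'⟩ < h b := hh (by simp [Fin.lt_def]; omega)
    omega

/-- Sum of a monotone function over any subset of `Fin k` of cardinality `k - i`
is at most its sum over `Ici i`. -/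
lemma aux_sum_le_tail {k : ℕ} (f : Fin k → ℕ) (hf : Monotone f) (i : Fin k)
    (S : Finset (Fin k)) (hc : S.card = (Finset.Ici i).card) :
    ∑ j ∈ S, f j ≤ ∑ j ∈ Finset.Ici i, f j := by
  set m : ℕ := (Finset.Ici i).card with hm
  have hmval : m = k - i.val := by rw [hm, Fin.card_Ici]
  have hik : i.val < k := i.isLt
  have hmpos : 0 < m := by omega
  set eS := S.orderEmbOfFin hc with heS
  set eT := (Finset.Ici i).orderEmbOfFin rfl with heT
  have hS : ∑ j ∈ S, f j = ∑ t : Fin m, f (eS t) := by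
    rw [← Finset.sum_coe_sort S f]
    exact (Equiv.sum_comp (S.orderIsoOfFin hc).toEquiv (fun j => f j)).symm
  have hT : ∑ j ∈ Finset.Ici i, f j = ∑ t : Fin m, f (eT t) := by
    rw [← Finset.sum_coe_sort (Finset.Ici i) f]
    exact (Equiv.sum_comp ((Finset.Ici i).orderIsoOfFin rfl).toEquiv (fun j => f j)).symm
  rw [hS, hT]
  apply Finset.sum_le_sum
  intro t _
  apply hf
  -- show eS t ≤ eT t
  have hSm : StrictMono (fun u : Fin m => (eS u).val) := fun a b hab => eS.strictMono hab
  have hTm : StrictMono (fun u : Fin m => (eT u).val) := fun a b hab => eT.strictMono hab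
  -- lower bound on eT t
  have h0 : (⟨0, hmpos⟩ : Fin m).val = 0 := rfl
  have hT0mem : eT ⟨0, hmpos⟩ ∈ Finset.Ici i := Finset.orderEmbOfFin_mem _ rfl _
  have hT0' : i ≤ eT ⟨0, hmpos⟩ := Finset.mem_Ici.mp hT0mem
  have hT0 : i.val ≤ (eT ⟨0, hmpos⟩).val := Fin.le_def.mp hT0'
  have hTlow := aux_strictMono_gap _ hTm t.val ⟨0, hmpos⟩ t (by simp)
  -- upper bound on eS t
  have hlast : (m - 1) < m := by omega
  have hSup := aux_strictMono_gap _ hSm (m - 1 - t.val) t ⟨m - 1, hlast⟩ (by simp; omega)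
  have hSlastlt : (eS ⟨m - 1, hlast⟩).val < k := (eS ⟨m - 1, hlast⟩).isLt
  rw [Fin.le_def]
  omega

/-- The weakly increasing rearrangement `ν` of the tuple `(λ_j + α_{σ(j)})_j`
is dominated by the componentwise sum `λ + α`. -/
theorem sorted_perm_add_dominated {k : ℕ} (lam α : Fin k → ℕ) (σ : Equiv.Perm (Fin k))
    (hlam : Monotone lam) (hα : Monotone α)
    (ν : Fin k → ℕ) (hν : Monotone ν)
    (π : Equiv.Perm (Fin k)) (hrearr : ∀ j : Fin k, ν (π j) = lam j + α (σ j)) :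
    DominatedBy ν (fun j => lam j + α j) := by
  intro i
  set S : Finset (Fin k) := (Finset.Ici i).image π.symm with hSdef
  have hcard : S.card = (Finset.Ici i).card :=
    Finset.card_image_of_injective _ π.symm.injective
  have h1 : ∑ j ∈ Finset.Ici i, ν j = ∑ u ∈ S, (lam u + α (σ u)) := by
    rw [hSdef, Finset.sum_image (fun a _ b _ hab => π.symm.injective hab)]
    apply Finset.sum_congr rfl
    intro x _
    rw [← hrearr (π.symm x), Equiv.apply_symm_apply]
  rw [h1, Finset.sum_add_distrib, Finset.sum_add_distrib]
  have h2 : ∑ u ∈ S, α (σ u) = ∑ v ∈ S.image σ, α v := by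
    rw [Finset.sum_image (fun a _ b _ hab => σ.injective hab)]
  have h3 : (S.image σ).card = (Finset.Ici i).card := by
    rw [Finset.card_image_of_injective _ σ.injective, hcard]
  exact Nat.add_le_add (aux_sum_le_tail lam hlam i S hcard)
    (h2 ▸ aux_sum_le_tail α hα i (S.image σ) h3)
end

section
/- Let q ∈ ℕ, N ∈ ℕ, and b ∈ ℕ_0^N a weakly increasing tuple. Define the root partition λ^{(q)}_N(b)_j = q(j−1) + b_j for j = 1,…,N. For any partition μ of the same integer with μ ⪯ λ^{(q)}_N(b) in dominance order, define Γ_b(μ) = Σ_{j=1}^N (N + 1/2 − j)(μ_j − λ^{(q)}_N(b)_j) and Δ_b(μ) = Σ_{j=1}^N (λ^{(q)}_N(b)_j² − μ_j²). Then Γ_b(μ) ≤ Δ_b(μ). -/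
/-- For any partition `μ` dominated by the root partition `λ^{(q)}_N(b)_j = q(j-1)+b_j`,
one has `Γ_b(μ) ≤ Δ_b(μ)`. -/
theorem gamma_le_delta (q N : ℕ) (hq : 1 ≤ q) (b : Fin N → ℕ) (hb : Monotone b)
    (μ : Fin N → ℕ) (hμ : Monotone μ)
    (hsum : ∑ j, μ j = ∑ j : Fin N, (q * (j : ℕ) + b j))
    (hdom : DominatedBy μ (fun j => q * (j : ℕ) + b j)) :
    ∑ j : Fin N, ((N : ℝ) + 1 / 2 - ((j : ℕ) + 1)) * ((μ j : ℝ) - (q * (j : ℕ) + b j)) ≤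
      ∑ j : Fin N, (((q * (j : ℕ) + b j : ℕ) : ℝ) ^ 2 - (μ j : ℝ) ^ 2) := by
  classical
  set lam : Fin N → ℕ := fun j => q * (j : ℕ) + b j with hlam
  -- extended real-valued versions
  set d : ℕ → ℝ := fun i => if h : i < N then ((lam ⟨i, h⟩ : ℝ) - μ ⟨i, h⟩) else 0 with hd
  set c : ℕ → ℝ := fun i =>
    if h : i < N then ((lam ⟨i, h⟩ : ℝ) + μ ⟨i, h⟩ + N - 1/2 - i) else 0 with hc
  have hdval : ∀ j : Fin N, d (j : ℕ) = (lam j : ℝ) - μ j := by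
    intro j; simp [hd, j.isLt]
  have hcval : ∀ j : Fin N, c (j : ℕ) = (lam j : ℝ) + μ j + N - 1/2 - (j : ℕ) := by
    intro j; simp [hc, j.isLt]
  -- total sum of d is zero
  have total : ∑ i ∈ Finset.range N, d i = 0 := by
    rw [← Fin.sum_univ_eq_sum_range]
    have : ∑ j : Fin N, d (j : ℕ) = ∑ j : Fin N, ((lam j : ℝ) - μ j) :=
      Finset.sum_congr rfl fun j _ => hdval j
    rw [this, Finset.sum_sub_distrib, sub_eq_zero]
    rw [← Nat.cast_sum, ← Nat.cast_sum, hsum]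
  -- prefix sums of d are nonpositive
  have prefix_nonpos : ∀ k, k ≤ N → ∑ i ∈ Finset.range k, d i ≤ 0 := by
    intro k hk
    have hsplit : ∑ i ∈ Finset.range k, d i + ∑ i ∈ Finset.Ico k N, d i
        = ∑ i ∈ Finset.range N, d i := by
      rw [Finset.range_eq_Ico, Finset.range_eq_Ico]
      exact Finset.sum_Ico_consecutive d (Nat.zero_le k) hk
    have htail : 0 ≤ ∑ i ∈ Finset.Ico k N, d i := by
      rcases eq_or_lt_of_le hk with h | hklt
      · subst h; simp
      · -- rewrite the Ico-sum as a sum over `Finset.Ici` in `Fin N`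
        set kF : Fin N := ⟨k, hklt⟩ with hkF
        have h1 : ∑ i ∈ Finset.Ico k N, d i
            = ∑ i ∈ Finset.range N, (if k ≤ i then d i else 0) := by
          rw [Finset.range_eq_Ico, ← Finset.sum_Ico_consecutive _ (Nat.zero_le k) hk]
          have hz : ∑ i ∈ Finset.Ico 0 k, (if k ≤ i then d i else 0) = 0 := by
            apply Finset.sum_eq_zero
            intro i hi
            rw [Finset.mem_Ico] at hi
            simp [Nat.not_le_of_lt hi.2]
          have hone : ∑ i ∈ Finset.Ico k N, (if k ≤ i then d i else 0)
              = ∑ i ∈ Finset.Ico k N, d i := by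
            apply Finset.sum_congr rfl
            intro i hi
            rw [Finset.mem_Ico] at hi
            simp [hi.1]
          rw [hz, hone]; ring
        have h2 : ∑ i ∈ Finset.range N, (if k ≤ i then d i else 0)
            = ∑ j : Fin N, (if k ≤ (j : ℕ) then d (j : ℕ) else 0) :=
          (Fin.sum_univ_eq_sum_range (fun i => if k ≤ i then d i else 0) N).symm
        have h3 : ∑ j : Fin N, (if k ≤ (j : ℕ) then d (j : ℕ) else 0)
            = ∑ j ∈ Finset.Ici kF, ((lam j : ℝ) - μ j) := by
          have hIci : Finset.Ici kF = Finset.univ.filter (fun j => kF ≤ j) := by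
            ext j; simp
          rw [hIci, Finset.sum_filter]
          apply Finset.sum_congr rfl
          intro j _
          by_cases hj : kF ≤ j
          · have : k ≤ (j : ℕ) := hj
            simp [hj, this, hdval j]
          · have : ¬ k ≤ (j : ℕ) := fun h => hj h
            simp [hj, this]
        rw [h1, h2, h3]
        have := hdom kF
        rw [Finset.sum_sub_distrib, sub_nonneg]
        exact_mod_cast this
    linarith
  -- c is monotone on `[0, N)`
  have cmono : ∀ i, i + 1 < N → c i ≤ c (i + 1) := by
    intro i hi1
    have hi : i < N := Nat.lt_of_succ_lt hi1
    have hble : b ⟨i, hi⟩ ≤ b ⟨i + 1, hi1⟩ := hb (by simp [Fin.mk_le_mk])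
    have hmle : μ ⟨i, hi⟩ ≤ μ ⟨i + 1, hi1⟩ := hμ (by simp [Fin.mk_le_mk])
    have e1 : c i = (lam ⟨i, hi⟩ : ℝ) + μ ⟨i, hi⟩ + N - 1/2 - i := by simp [hc, hi]
    have e2 : c (i + 1) = (lam ⟨i + 1, hi1⟩ : ℝ) + μ ⟨i + 1, hi1⟩ + N - 1/2 - (i + 1) := by
      simp [hc, hi1]
    rw [e1, e2, hlam]
    simp only []
    push_cast
    have hble' : (b ⟨i, hi⟩ : ℝ) ≤ b ⟨i + 1, hi1⟩ := by exact_mod_cast hble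
    have hmle' : (μ ⟨i, hi⟩ : ℝ) ≤ μ ⟨i + 1, hi1⟩ := by exact_mod_cast hmle
    have hq' : (1 : ℝ) ≤ q := by exact_mod_cast hq
    nlinarith
  -- summation by parts
  have key : 0 ≤ ∑ i ∈ Finset.range N, c i * d i := by
    have := Finset.sum_range_by_parts c d N
    simp only [smul_eq_mul] at this
    rw [this, total, mul_zero]
    have : ∑ i ∈ Finset.range (N - 1), (c (i + 1) - c i) * ∑ j ∈ Finset.range (i + 1), d j
        ≤ 0 := by
      apply Finset.sum_nonpos
      intro i hi
      rw [Finset.mem_range] at hi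
      have hi1 : i + 1 < N := by omega
      have h1 : 0 ≤ c (i + 1) - c i := sub_nonneg.mpr (cmono i hi1)
      have h2 : ∑ j ∈ Finset.range (i + 1), d j ≤ 0 := prefix_nonpos (i + 1) (by omega)
      exact mul_nonpos_of_nonneg_of_nonpos h1 h2
    linarith
  -- conclude
  rw [← sub_nonneg, ← Finset.sum_sub_distrib]
  calc (0 : ℝ) ≤ ∑ i ∈ Finset.range N, c i * d i := key
    _ = ∑ j : Fin N, c (j : ℕ) * d (j : ℕ) :=
        (Fin.sum_univ_eq_sum_range (fun i => c i * d i) N).symm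
    _ = ∑ j : Fin N, ((((lam j : ℕ) : ℝ)) ^ 2 - (μ j : ℝ) ^ 2
          - ((N : ℝ) + 1 / 2 - ((j : ℕ) + 1)) * ((μ j : ℝ) - ((lam j : ℕ) : ℝ))) := by
        apply Finset.sum_congr rfl
        intro j _
        rw [hcval j, hdval j]
        ring
    _ = _ := by
        apply Finset.sum_congr rfl
        intro j _
        rw [hlam]
        push_cast
        ring
end

section
/- Let q, N_1, N_2 ∈ ℕ and let b^{(1)} ∈ ℕ_0^{N_1}, b^{(2)} ∈ ℕ_0^{N_2} be weakly increasing tuples. Suppose μ^{(1)} ⪯ λ^{(q)}_{N_1}(b^{(1)}) and μ^{(2)} ⪯ λ^{(q)}_{N_2}(b^{(2)}). Define the concatenation μ^{(1)} ∪ μ^{(2)} = (μ^{(1)}_1, …, μ^{(1)}_{N_1}, qN_1 + b^{(1)}_{N_1} + μ^{(2)}_1, …, qN_1 + b^{(1)}_{N_1} + μ^{(2)}_{N_2}) and the composed tuple b = (b^{(1)}_1, …, b^{(1)}_{N_1}, b^{(1)}_{N_1} + b^{(2)}_1, …, b^{(1)}_{N_1} + b^{(2)}_{N_2}). Then μ^{(1)}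 ∪ μ^{(2)} ⪯ λ^{(q)}_{N_1+N_2}(b) in dominance order. -/
lemma tail_ite {k : ℕ} (i : Fin k) (f : Fin k → ℕ) :
    ∑ j ∈ Finset.Ici i, f j = ∑ j : Fin k, if (i:ℕ) ≤ (j:ℕ) then f j else 0 := by
  rw [← Finset.sum_filter]
  congr 1
  ext j
  simp only [Finset.mem_Ici, Finset.mem_filter, Finset.mem_univ, true_and, Fin.le_def]


/-- The concatenation of two partitions dominated by root partitions is dominated
by the root partition of the composed root. -/
theorem concat_dominated (q N₁ N₂ : ℕ) (hq : 1 ≤ q) (hN₁ : 1 ≤ N₁) (hN₂ : 1 ≤ N₂)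
    (b₁ : Fin N₁ → ℕ) (b₂ : Fin N₂ → ℕ) (hb₁ : Monotone b₁) (hb₂ : Monotone b₂)
    (μ₁ : Fin N₁ → ℕ) (μ₂ : Fin N₂ → ℕ) (hμ₁ : Monotone μ₁) (hμ₂ : Monotone μ₂)
    (hsum₁ : ∑ j, μ₁ j = ∑ j : Fin N₁, (q * (j : ℕ) + b₁ j))
    (hsum₂ : ∑ j, μ₂ j = ∑ j : Fin N₂, (q * (j : ℕ) + b₂ j))
    (hdom₁ : DominatedBy μ₁ (fun j => q * (j : ℕ) + b₁ j))
    (hdom₂ : DominatedBy μ₂ (fun j => q * (j : ℕ) + b₂ j)) :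
    DominatedBy
      (Fin.append μ₁ (fun j => q * N₁ + b₁ ⟨N₁ - 1, by omega⟩ + μ₂ j))
      (fun j : Fin (N₁ + N₂) =>
        q * (j : ℕ) + Fin.append b₁ (fun i => b₁ ⟨N₁ - 1, by omega⟩ + b₂ i) j) := by
  set c := b₁ ⟨N₁ - 1, by omega⟩ with hc
  intro i
  rw [tail_ite, tail_ite, Fin.sum_univ_add, Fin.sum_univ_add]
  simp only [Fin.append_left, Fin.append_right, Fin.coe_castAdd, Fin.coe_natAdd]
  by_cases h : (i:ℕ) < N₁
  · have key := hdom₁ ⟨(i:ℕ), h⟩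
    rw [tail_ite, tail_ite] at key
    have t1 : ∑ x : Fin N₂, (if (i:ℕ) ≤ N₁ + (x:ℕ) then q * N₁ + c + μ₂ x else 0)
        = N₂ * (q * N₁ + c) + ∑ x, μ₂ x := by
      have e : ∀ x : Fin N₂, (if (i:ℕ) ≤ N₁ + (x:ℕ) then q * N₁ + c + μ₂ x else 0)
          = q * N₁ + c + μ₂ x := fun x => if_pos (by omega)
      simp only [e]
      rw [Finset.sum_add_distrib, Finset.sum_const, Finset.card_univ, Fintype.card_fin,
        smul_eq_mul]
    have t2 : ∑ x : Fin N₂, (if (i:ℕ) ≤ N₁ + (x:ℕ) then q * ((N₁:ℕ) + (x:ℕ)) + (c + b₂ x) else 0)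
        = N₂ * (q * N₁ + c) + ∑ x : Fin N₂, (q * (x:ℕ) + b₂ x) := by
      have e : ∀ x : Fin N₂, (if (i:ℕ) ≤ N₁ + (x:ℕ) then q * ((N₁:ℕ) + (x:ℕ)) + (c + b₂ x) else 0)
          = (q * N₁ + c) + (q * (x:ℕ) + b₂ x) := fun x => by
        rw [if_pos (by omega)]; ring
      simp only [e]
      rw [Finset.sum_add_distrib, Finset.sum_const, Finset.card_univ, Fintype.card_fin,
        smul_eq_mul]
    rw [t1, t2, hsum₂]
    have key' : (∑ x : Fin N₁, if (i:ℕ) ≤ (x:ℕ) then μ₁ x else 0)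
        ≤ ∑ x : Fin N₁, if (i:ℕ) ≤ (x:ℕ) then q * (x:ℕ) + b₁ x else 0 := key
    omega
  · have hi2 : (i:ℕ) - N₁ < N₂ := by omega
    have key := hdom₂ ⟨(i:ℕ) - N₁, hi2⟩
    rw [tail_ite, tail_ite] at key
    have key' : (∑ x : Fin N₂, if (i:ℕ) - N₁ ≤ (x:ℕ) then μ₂ x else 0)
        ≤ ∑ x : Fin N₂, if (i:ℕ) - N₁ ≤ (x:ℕ) then q * (x:ℕ) + b₂ x else 0 := key
    have z1 : ∑ x : Fin N₁, (if (i:ℕ) ≤ (x:ℕ) then μ₁ x else 0) = 0 :=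
      Finset.sum_eq_zero fun x _ => if_neg (by omega)
    have z2 : ∑ x : Fin N₁, (if (i:ℕ) ≤ (x:ℕ) then q * (x:ℕ) + b₁ x else 0) = 0 :=
      Finset.sum_eq_zero fun x _ => if_neg (by omega)
    have t1 : ∑ x : Fin N₂, (if (i:ℕ) ≤ N₁ + (x:ℕ) then q * N₁ + c + μ₂ x else 0)
        = (∑ x : Fin N₂, if (i:ℕ) - N₁ ≤ (x:ℕ) then q * N₁ + c else 0)
          + ∑ x : Fin N₂, (if (i:ℕ) - N₁ ≤ (x:ℕ) then μ₂ x else 0) := by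
      rw [← Finset.sum_add_distrib]
      refine Finset.sum_congr rfl fun x _ => ?_
      by_cases hx : (i:ℕ) - N₁ ≤ (x:ℕ)
      · rw [if_pos (by omega), if_pos hx, if_pos hx]
      · rw [if_neg (by omega), if_neg hx, if_neg hx]
    have t2 : ∑ x : Fin N₂, (if (i:ℕ) ≤ N₁ + (x:ℕ) then q * ((N₁:ℕ) + (x:ℕ)) + (c + b₂ x) else 0)
        = (∑ x : Fin N₂, if (i:ℕ) - N₁ ≤ (x:ℕ) then q * N₁ + c else 0)
          + ∑ x : Fin N₂, (if (i:ℕ) - N₁ ≤ (x:ℕ) then q * (x:ℕ) + b₂ x else 0) := by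
      rw [← Finset.sum_add_distrib]
      refine Finset.sum_congr rfl fun x _ => ?_
      by_cases hx : (i:ℕ) - N₁ ≤ (x:ℕ)
      · rw [if_pos (by omega), if_pos hx, if_pos hx]; ring
      · rw [if_neg (by omega), if_neg hx, if_neg hx]
    rw [z1, z2, t1, t2]
    omega
end

section
/- Let λ be a partition (weakly increasing tuple of nonnegative integers) of length n, let 1 ≤ i < j ≤ n and s ∈ ℕ with s ≤ (λ_j − λ_i)/2, and suppose λ_i < λ_{i+1} and λ_j > λ_{j−1} (admissibility). Let R_{ij}^s λ be the weakly increasing rearrangement of the tuple obtained by replacing λ_i with λ_i + s and λ_j with λ_j − s. Then R_{ij}^s λ is a partition of the same integer with the same length, and R_{ij}^s λ ⪯ λ in dominance order. -/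
lemma sum_le_sum_Ici_of_card_le {n : ℕ} (lam : Fin n → ℕ) (hlam : Monotone lam)
    (T : Finset (Fin n)) (t : Fin n) (h : T.card ≤ (Finset.Ici t).card) :
    ∑ k ∈ T, lam k ≤ ∑ k ∈ Finset.Ici t, lam k := by
  have h1 : ∑ k ∈ T \ Finset.Ici t, lam k ≤ (T \ Finset.Ici t).card * lam t := by
    have := Finset.sum_le_card_nsmul (T \ Finset.Ici t) lam (lam t) ?_
    · simpa using this
    · intro x hx
      simp only [Finset.mem_sdiff, Finset.mem_Ici] at hx
      exact hlam (le_of_not_ge hx.2)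
  have h2 : (Finset.Ici t \ T).card * lam t ≤ ∑ k ∈ Finset.Ici t \ T, lam k := by
    have := Finset.card_nsmul_le_sum (Finset.Ici t \ T) lam (lam t) ?_
    · simpa using this
    · intro x hx
      simp only [Finset.mem_sdiff, Finset.mem_Ici] at hx
      exact hlam hx.1
  have hc1 : (T \ Finset.Ici t).card + (T ∩ Finset.Ici t).card = T.card :=
    Finset.card_sdiff_add_card_inter T _
  have hc2 : (Finset.Ici t \ T).card + (Finset.Ici t ∩ T).card = (Finset.Ici t).card :=
    Finset.card_sdiff_add_card_inter _ T
  have hic : (T ∩ Finset.Ici t).card = (Finset.Ici t ∩ T).card := by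
    rw [Finset.inter_comm]
  have hcard : (T \ Finset.Ici t).card ≤ (Finset.Ici t \ T).card := by omega
  have e1 : ∑ k ∈ T ∩ Finset.Ici t, lam k + ∑ k ∈ T \ Finset.Ici t, lam k
      = ∑ k ∈ T, lam k := Finset.sum_inter_add_sum_sdiff T _ lam
  have e2 : ∑ k ∈ Finset.Ici t ∩ T, lam k + ∑ k ∈ Finset.Ici t \ T, lam k
      = ∑ k ∈ Finset.Ici t, lam k := Finset.sum_inter_add_sum_sdiff _ T lam
  have eic : ∑ k ∈ T ∩ Finset.Ici t, lam k = ∑ k ∈ Finset.Ici t ∩ T, lam k := by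
    rw [Finset.inter_comm]
  have h3 : (T \ Finset.Ici t).card * lam t ≤ (Finset.Ici t \ T).card * lam t :=
    Nat.mul_le_mul_right _ hcard
  omega

/-- Applying an admissible squeezing operator `R_{ij}^s` to a partition yields a
partition of the same integer with the same length, dominated by the original one. -/
theorem squeeze_dominated {n : ℕ} (lam : Fin n → ℕ) (hlam : Monotone lam)
    (i j : Fin n) (hij : (i : ℕ) < (j : ℕ)) (s : ℕ) (hs : 1 ≤ s)
    (hhalf : lam i + 2 * s ≤ lam j)
    (hadm₁ : lam i < lam ⟨(i : ℕ) + 1, by have := j.isLt; omega⟩)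
    (hadm₂ : lam ⟨(j : ℕ) - 1, by have := j.isLt; omega⟩ < lam j)
    (ν : Fin n → ℕ) (hν : Monotone ν) (π : Equiv.Perm (Fin n))
    (hrearr : ∀ k : Fin n,
      ν (π k) = Function.update (Function.update lam i (lam i + s)) j (lam j - s) k) :
    (∑ k, ν k = ∑ k, lam k) ∧ DominatedBy ν lam := by
  set μ : Fin n → ℕ := Function.update (Function.update lam i (lam i + s)) j (lam j - s) with hμ
  have hij' : i ≠ j := by
    intro h; rw [h] at hij; omega
  have hsj : s ≤ lam j := by omega
  have hμi : μ i = lam i + s := by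
    simp [hμ, Function.update_of_ne hij']
  have hμj : μ j = lam j - s := by
    simp [hμ]
  have hμk : ∀ k, k ≠ i → k ≠ j → μ k = lam k := by
    intro k hki hkj
    simp [hμ, Function.update_of_ne hkj, Function.update_of_ne hki]
  have hν' : ∀ k, ν k = μ (π.symm k) := by
    intro k
    have := hrearr (π.symm k)
    simpa using this
  -- key: sum of μ over any set T with card ≤ card (Ici t) is ≤ sum of lam over Ici t
  have key : ∀ (T : Finset (Fin n)) (t : Fin n), T.card ≤ (Finset.Ici t).card →
      ∑ k ∈ T, μ k ≤ ∑ k ∈ Finset.Ici t, lam k := by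
    intro T t hT
    by_cases hiT : i ∈ T
    · by_cases hjT : j ∈ T
      · -- both in T: sums equal
        have : ∑ k ∈ T, μ k = ∑ k ∈ T, lam k := by
          rw [← Finset.add_sum_erase T μ hiT, ← Finset.add_sum_erase T lam hiT]
          have hjT' : j ∈ T.erase i := Finset.mem_erase.2 ⟨(Ne.symm hij'), hjT⟩
          rw [← Finset.add_sum_erase _ μ hjT', ← Finset.add_sum_erase _ lam hjT']
          have : ∑ k ∈ (T.erase i).erase j, μ k = ∑ k ∈ (T.erase i).erase j, lam k := by
            apply Finset.sum_congr rfl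
            intro k hk
            simp only [Finset.mem_erase] at hk
            exact hμk k hk.2.1 hk.1
          rw [this, hμi, hμj]
          omega
        rw [this]
        exact sum_le_sum_Ici_of_card_le lam hlam T t hT
      · -- i ∈ T, j ∉ T: swap i for j
        set T' : Finset (Fin n) := insert j (T.erase i) with hT'
        have hjT' : j ∉ T.erase i := fun h => hjT (Finset.mem_of_mem_erase h)
        have hcard' : T'.card = T.card := by
          rw [hT', Finset.card_insert_of_notMem hjT', Finset.card_erase_of_mem hiT]
          have : 1 ≤ T.card := Finset.card_pos.2 ⟨i, hiT⟩
          omega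
        have h1 : ∑ k ∈ T, μ k ≤ ∑ k ∈ T', lam k := by
          rw [← Finset.add_sum_erase T μ hiT, hT',
            Finset.sum_insert hjT']
          have : ∑ k ∈ T.erase i, μ k = ∑ k ∈ T.erase i, lam k := by
            apply Finset.sum_congr rfl
            intro k hk
            simp only [Finset.mem_erase] at hk
            exact hμk k hk.1 (fun h => hjT (h ▸ hk.2))
          rw [this, hμi]
          have : lam i + s ≤ lam j := by omega
          omega
        exact h1.trans (sum_le_sum_Ici_of_card_le lam hlam T' t (hcard' ▸ hT))
    · -- i ∉ T: pointwise ≤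
      have h1 : ∑ k ∈ T, μ k ≤ ∑ k ∈ T, lam k := by
        apply Finset.sum_le_sum
        intro k hk
        by_cases hkj : k = j
        · subst hkj; rw [hμj]; omega
        · rw [hμk k (fun h => hiT (h ▸ hk)) hkj]
      exact h1.trans (sum_le_sum_Ici_of_card_le lam hlam T t hT)
  -- sums over images
  have himg : ∀ (t : Finset (Fin n)), ∑ k ∈ t, ν k = ∑ k ∈ t.image π.symm, μ k := by
    intro t
    rw [Finset.sum_image (fun x _ y _ h => π.symm.injective h)]
    exact Finset.sum_congr rfl (fun k _ => hν' k)
  constructor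
  · -- total sum equality
    have h1 : ∑ k, ν k = ∑ k, μ k := by
      have h2 : Finset.image (⇑π.symm) Finset.univ = Finset.univ := by
        ext x; simp
      have := himg Finset.univ
      rwa [h2] at this
    rw [h1]
    rw [← Finset.add_sum_erase Finset.univ μ (Finset.mem_univ j),
      ← Finset.add_sum_erase Finset.univ lam (Finset.mem_univ j)]
    have hiu : i ∈ Finset.univ.erase j := Finset.mem_erase.2 ⟨hij', Finset.mem_univ i⟩
    rw [← Finset.add_sum_erase _ μ hiu, ← Finset.add_sum_erase _ lam hiu]
    have : ∑ k ∈ (Finset.univ.erase j).erase i, μ k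
        = ∑ k ∈ (Finset.univ.erase j).erase i, lam k := by
      apply Finset.sum_congr rfl
      intro k hk
      simp only [Finset.mem_erase] at hk
      exact hμk k hk.1 hk.2.1
    rw [this, hμi, hμj]
    omega
  · intro t
    rw [himg (Finset.Ici t)]
    apply key
    rw [Finset.card_image_of_injective _ π.symm.injective]
end

section
/- For every n ∈ ℕ, the number p(n) of partitions of n satisfies p(n) ≤ exp(π √(2n/3)). -/
open Finset Real


private lemma partition_sum_eq {n : ℕ} (p : Nat.Partition n) :
    ∑ i : Fin n, ((i : ℕ) + 1) * p.parts.count ((i : ℕ) + 1) = n := by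
  rw [Fin.sum_univ_eq_sum_range (fun k => (k + 1) * p.parts.count (k + 1)) n]
  have h1 : ∑ k ∈ range n, (k + 1) * p.parts.count (k + 1)
      = ∑ j ∈ Finset.Icc 1 n, j * p.parts.count j := by
    rw [← Finset.Ico_add_one_right_eq_Icc, Finset.sum_Ico_eq_sum_range]
    simp [Nat.add_comm 1]
  rw [h1]
  have h2 : ∑ j ∈ Finset.Icc 1 n, j * p.parts.count j
      = ∑ j ∈ p.parts.toFinset, j * p.parts.count j := by
    refine (Finset.sum_subset ?_ ?_).symm
    · intro a ha
      rw [Multiset.mem_toFinset] at ha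
      exact Finset.mem_Icc.mpr ⟨p.parts_pos ha,
        (Multiset.single_le_sum (fun _ _ => Nat.zero_le _) a ha).trans_eq p.parts_sum⟩
    · intro a _ ha
      rw [Multiset.mem_toFinset] at ha
      simp [Multiset.count_eq_zero_of_notMem ha]
  rw [h2]
  have h3 := Finset.sum_multiset_map_count p.parts (id : ℕ → ℕ)
  rw [Multiset.map_id] at h3
  conv_rhs => rw [← p.parts_sum, h3]
  simp [mul_comm]

private lemma partition_count_le {n : ℕ} (p : Nat.Partition n) (k : ℕ) :
    p.parts.count k ≤ n := by
  calc p.parts.count k ≤ Multiset.card p.parts := Multiset.count_le_card _ _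
    _ = Multiset.card p.parts • 1 := by simp
    _ ≤ p.parts.sum := Multiset.card_nsmul_le_sum (fun x hx => p.parts_pos hx)
    _ = n := p.parts_sum

set_option maxHeartbeats 1000000 in
private lemma partition_card_mul_le {n : ℕ} {x : ℝ} (hx0 : 0 ≤ x) :
    (Fintype.card (Nat.Partition n) : ℝ) * x ^ n ≤
      ∏ i : Fin n, ∑ m ∈ Finset.range (n + 1), x ^ (((i : ℕ) + 1) * m) := by
  classical
  rw [Finset.prod_univ_sum]
  set φ : Nat.Partition n → (Fin n → ℕ) := fun p i => p.parts.count ((i : ℕ) + 1) with hφ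
  have hmem : ∀ p : Nat.Partition n, φ p ∈ Fintype.piFinset (fun _ : Fin n => Finset.range (n + 1)) := by
    intro p
    rw [Fintype.mem_piFinset]
    intro i
    exact Finset.mem_range.mpr (Nat.lt_succ_of_le (partition_count_le p _))
  have hinj : Function.Injective φ := by
    intro p q hpq
    ext a
    rcases Nat.eq_zero_or_pos a with rfl | ha
    · rw [Multiset.count_eq_zero_of_notMem (fun h => lt_irrefl 0 (p.parts_pos h)),
        Multiset.count_eq_zero_of_notMem (fun h => lt_irrefl 0 (q.parts_pos h))]
    · rcases le_or_gt a n with han | han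
      · have hi : a - 1 < n := by omega
        have := congrFun hpq ⟨a - 1, hi⟩
        simpa [φ, Nat.sub_add_cancel ha] using this
      · rw [Multiset.count_eq_zero_of_notMem, Multiset.count_eq_zero_of_notMem]
        · intro h
          exact absurd ((Multiset.single_le_sum (fun _ _ => Nat.zero_le _) a h).trans_eq
            q.parts_sum) (by omega)
        · intro h
          exact absurd ((Multiset.single_le_sum (fun _ _ => Nat.zero_le _) a h).trans_eq
            p.parts_sum) (by omega)
  have hterm : ∀ p : Nat.Partition n, ∏ i : Fin n, x ^ (((i : ℕ) + 1) * φ p i) = x ^ n := by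
    intro p
    rw [Finset.prod_pow_eq_pow_sum, partition_sum_eq p]
  calc (Fintype.card (Nat.Partition n) : ℝ) * x ^ n
      = ∑ _p : Nat.Partition n, x ^ n := by
        rw [Finset.sum_const, Finset.card_univ, nsmul_eq_mul]
    _ = ∑ p : Nat.Partition n, ∏ i : Fin n, x ^ (((i : ℕ) + 1) * φ p i) := by
        exact Finset.sum_congr rfl fun p _ => (hterm p).symm
    _ = ∑ g ∈ Finset.univ.image φ, ∏ i : Fin n, x ^ (((i : ℕ) + 1) * g i) :=
        (Finset.sum_image (f := fun g : Fin n → ℕ => ∏ i : Fin n, x ^ (((i : ℕ) + 1) * g i))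
          (fun p _ q _ h => hinj h)).symm
    _ ≤ ∑ g ∈ Fintype.piFinset (fun _ : Fin n => Finset.range (n + 1)),
          ∏ i : Fin n, x ^ (((i : ℕ) + 1) * g i) := by
        refine Finset.sum_le_sum_of_subset_of_nonneg ?_ ?_
        · intro g hg
          obtain ⟨p, _, rfl⟩ := Finset.mem_image.mp hg
          exact hmem p
        · intro g _ _
          exact Finset.prod_nonneg fun i _ => pow_nonneg hx0 _


private lemma geom_partial_le {y : ℝ} (hy0 : 0 ≤ y) (hy1 : y < 1) (N : ℕ) :
    ∑ i ∈ Finset.range N, y ^ i ≤ (1 - y)⁻¹ := by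
  have h := Summable.sum_le_tsum (Finset.range N) (fun i _ => pow_nonneg hy0 i)
    (summable_geometric_of_lt_one hy0 hy1)
  rwa [tsum_geometric_of_lt_one hy0 hy1] at h

private lemma geom_tail_le {y : ℝ} (hy0 : 0 ≤ y) (hy1 : y < 1) (N : ℕ) :
    ∑ i ∈ Finset.range N, y ^ (i + 1) ≤ y / (1 - y) := by
  have h : ∑ i ∈ Finset.range N, y ^ (i + 1) = y * ∑ i ∈ Finset.range N, y ^ i := by
    rw [Finset.mul_sum]
    exact Finset.sum_congr rfl fun i _ => by ring
  rw [h, div_eq_mul_inv]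
  exact mul_le_mul_of_nonneg_left (geom_partial_le hy0 hy1 N) hy0

private lemma pow_div_le_div {x : ℝ} (hx0 : 0 < x) (hx1 : x < 1) (j : ℕ) :
    x ^ (j + 1) / (1 - x ^ (j + 1)) ≤ x / ((j + 1) * (1 - x)) := by
  have hxm : x ^ (j + 1) < 1 := pow_lt_one₀ hx0.le hx1 (Nat.succ_ne_zero j)
  have hd1 : (0:ℝ) < 1 - x ^ (j + 1) := by linarith
  have hx' : (0:ℝ) < 1 - x := by linarith
  have hd2 : (0:ℝ) < ((j:ℝ) + 1) * (1 - x) := by positivity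
  rw [div_le_div_iff₀ hd1 hd2]
  have key : ((j:ℝ) + 1) * x ^ j * (1 - x) ≤ 1 - x ^ (j + 1) := by
    have hgeom : (1 - x) * ∑ i ∈ Finset.range (j + 1), x ^ i = 1 - x ^ (j + 1) := by
      have := geom_sum_mul x (j + 1)
      nlinarith [this]
    have hsum : ((j:ℝ) + 1) * x ^ j ≤ ∑ i ∈ Finset.range (j + 1), x ^ i := by
      have : ∀ i ∈ Finset.range (j + 1), x ^ j ≤ x ^ i := fun i hi =>
        pow_le_pow_of_le_one hx0.le hx1.le (Nat.lt_succ_iff.mp (Finset.mem_range.mp hi))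
      calc ((j:ℝ) + 1) * x ^ j = (Finset.range (j+1)).card • x ^ j := by
            simp [nsmul_eq_mul]
        _ ≤ ∑ i ∈ Finset.range (j + 1), x ^ i := Finset.card_nsmul_le_sum _ _ _ this
    nlinarith [hsum, sub_pos.mpr hx1]
  calc x ^ (j + 1) * (((j:ℝ) + 1) * (1 - x)) = x * (((j:ℝ) + 1) * x ^ j * (1 - x)) := by ring
    _ ≤ x * (1 - x ^ (j + 1)) := mul_le_mul_of_nonneg_left key hx0.le

private lemma summable_inv_sq_succ : Summable (fun j : ℕ => 1 / ((j:ℝ) + 1) ^ 2) := by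
  have h := hasSum_zeta_two.summable
  have := (summable_nat_add_iff 1).mpr h
  simpa using this

private lemma tsum_inv_sq_succ : ∑' j : ℕ, 1 / ((j:ℝ) + 1) ^ 2 = π ^ 2 / 6 := by
  have h := hasSum_zeta_two
  have h0 := h.tsum_eq
  rw [Summable.tsum_eq_zero_add h.summable] at h0
  simpa using h0

private lemma log_sum_bound {x : ℝ} (hx0 : 0 < x) (hx1 : x < 1) (n : ℕ) :
    ∑ i ∈ Finset.range n, (-Real.log (1 - x ^ (i + 1))) ≤ π ^ 2 / 6 * (x / (1 - x)) := by
  have hx' : (0:ℝ) < 1 - x := by linarith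
  -- power series for each term
  have hps : ∀ i : ℕ, HasSum (fun j : ℕ => x ^ ((i + 1) * (j + 1)) / ((j:ℝ) + 1))
      (-Real.log (1 - x ^ (i + 1))) := by
    intro i
    have habs : |x ^ (i + 1)| < 1 := by
      rw [abs_of_nonneg (pow_nonneg hx0.le _)]
      exact pow_lt_one₀ hx0.le hx1 (Nat.succ_ne_zero i)
    have := hasSum_pow_div_log_of_abs_lt_one habs
    convert this using 2 with j
    rw [← pow_mul, mul_comm (i+1) (j+1)]
  have hsummable : ∀ i ∈ Finset.range n,
      Summable (fun j : ℕ => x ^ ((i + 1) * (j + 1)) / ((j:ℝ) + 1)) :=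
    fun i _ => (hps i).summable
  have hswap : ∑ i ∈ Finset.range n, (-Real.log (1 - x ^ (i + 1)))
      = ∑' j : ℕ, ∑ i ∈ Finset.range n, x ^ ((i + 1) * (j + 1)) / ((j:ℝ) + 1) := by
    rw [Summable.tsum_finsetSum hsummable]
    exact Finset.sum_congr rfl fun i _ => ((hps i).tsum_eq).symm
  rw [hswap]
  have hbound : ∀ j : ℕ, ∑ i ∈ Finset.range n, x ^ ((i + 1) * (j + 1)) / ((j:ℝ) + 1)
      ≤ x / (1 - x) * (1 / ((j:ℝ) + 1) ^ 2) := by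
    intro j
    have hy0 : (0:ℝ) ≤ x ^ (j + 1) := pow_nonneg hx0.le _
    have hy1 : x ^ (j + 1) < 1 := pow_lt_one₀ hx0.le hx1 (Nat.succ_ne_zero j)
    have h1 : ∑ i ∈ Finset.range n, x ^ ((i + 1) * (j + 1)) / ((j:ℝ) + 1)
        = (∑ i ∈ Finset.range n, (x ^ (j + 1)) ^ (i + 1)) / ((j:ℝ) + 1) := by
      rw [Finset.sum_div]
      refine Finset.sum_congr rfl fun i _ => ?_
      rw [← pow_mul, mul_comm (j+1) (i+1)]
    rw [h1]
    have h2 : (∑ i ∈ Finset.range n, (x ^ (j + 1)) ^ (i + 1)) / ((j:ℝ) + 1)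
        ≤ (x ^ (j + 1) / (1 - x ^ (j + 1))) / ((j:ℝ) + 1) := by
      apply div_le_div_of_nonneg_right ?_ (by positivity)
      · exact geom_tail_le hy0 hy1 n
    refine h2.trans ?_
    have h3 := pow_div_le_div hx0 hx1 j
    have h4 : x / (((j:ℝ) + 1) * (1 - x)) / ((j:ℝ) + 1)
        = x / (1 - x) * (1 / ((j:ℝ) + 1) ^ 2) := by
      rw [div_div, mul_one_div, div_div]
      congr 1
      ring
    calc x ^ (j + 1) / (1 - x ^ (j + 1)) / ((j:ℝ) + 1)
        ≤ x / (((j:ℝ) + 1) * (1 - x)) / ((j:ℝ) + 1) :=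
          div_le_div_of_nonneg_right h3 (by positivity)
      _ = x / (1 - x) * (1 / ((j:ℝ) + 1) ^ 2) := h4
  have hbsum : Summable (fun j : ℕ => x / (1 - x) * (1 / ((j:ℝ) + 1) ^ 2)) :=
    summable_inv_sq_succ.mul_left _
  have hlsum : Summable (fun j : ℕ => ∑ i ∈ Finset.range n, x ^ ((i + 1) * (j + 1)) / ((j:ℝ) + 1)) := by
    refine Summable.of_nonneg_of_le (fun j => ?_) hbound hbsum
    exact Finset.sum_nonneg fun i _ => by positivity
  calc ∑' j : ℕ, ∑ i ∈ Finset.range n, x ^ ((i + 1) * (j + 1)) / ((j:ℝ) + 1)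
      ≤ ∑' j : ℕ, x / (1 - x) * (1 / ((j:ℝ) + 1) ^ 2) := Summable.tsum_le_tsum hbound hlsum hbsum
    _ = x / (1 - x) * (π ^ 2 / 6) := by rw [tsum_mul_left, tsum_inv_sq_succ]
    _ = π ^ 2 / 6 * (x / (1 - x)) := by ring

private lemma partition_card_le_aux {n : ℕ} {x : ℝ} (hx0 : 0 < x) (hx1 : x < 1) :
    (Fintype.card (Nat.Partition n) : ℝ) * x ^ n ≤
      Real.exp (π ^ 2 / 6 * (x / (1 - x))) := by
  have hpow : ∀ k : ℕ, x ^ (k + 1) < 1 := fun k => pow_lt_one₀ hx0.le hx1 (Nat.succ_ne_zero k)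
  have h1 := partition_card_mul_le (n := n) hx0.le
  have h2 : ∏ i : Fin n, ∑ m ∈ Finset.range (n + 1), x ^ (((i : ℕ) + 1) * m)
      ≤ ∏ i : Fin n, (1 - x ^ ((i : ℕ) + 1))⁻¹ := by
    refine Finset.prod_le_prod (fun i _ => ?_) (fun i _ => ?_)
    · exact Finset.sum_nonneg fun m _ => pow_nonneg hx0.le _
    · have : ∑ m ∈ Finset.range (n + 1), x ^ (((i : ℕ) + 1) * m)
          = ∑ m ∈ Finset.range (n + 1), (x ^ ((i : ℕ) + 1)) ^ m := by
        exact Finset.sum_congr rfl fun m _ => by rw [pow_mul]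
      rw [this]
      exact geom_partial_le (pow_nonneg hx0.le _) (hpow _) _
  have h3 : ∏ i : Fin n, (1 - x ^ ((i : ℕ) + 1))⁻¹
      = Real.exp (∑ i ∈ Finset.range n, (-Real.log (1 - x ^ (i + 1)))) := by
    rw [Real.exp_sum, Fin.prod_univ_eq_prod_range (fun i => (1 - x ^ (i + 1))⁻¹) n]
    refine Finset.prod_congr rfl fun i _ => ?_
    rw [Real.exp_neg, Real.exp_log (by linarith [hpow i])]
  have h4 := Real.exp_le_exp.mpr (log_sum_bound hx0 hx1 n)
  calc (Fintype.card (Nat.Partition n) : ℝ) * x ^ n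
      ≤ ∏ i : Fin n, ∑ m ∈ Finset.range (n + 1), x ^ (((i : ℕ) + 1) * m) := h1
    _ ≤ ∏ i : Fin n, (1 - x ^ ((i : ℕ) + 1))⁻¹ := h2
    _ = Real.exp (∑ i ∈ Finset.range n, (-Real.log (1 - x ^ (i + 1)))) := h3
    _ ≤ Real.exp (π ^ 2 / 6 * (x / (1 - x))) := h4

/-- The number of partitions of `n` is at most `exp(π √(2n/3))`. -/
theorem partition_count_bound (n : ℕ) (hn : 1 ≤ n) :
    (Fintype.card (Nat.Partition n) : ℝ) ≤
      Real.exp (Real.pi * Real.sqrt (2 * n / 3)) := by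
  have hn0 : (0:ℝ) < n := by exact_mod_cast hn
  set s : ℝ := Real.sqrt (6 * n) with hs_def
  have hs : 0 < s := Real.sqrt_pos.mpr (by positivity)
  have hs2 : s ^ 2 = 6 * n := Real.sq_sqrt (by positivity)
  set t : ℝ := π / s with ht_def
  have ht : 0 < t := div_pos Real.pi_pos hs
  set x : ℝ := 1 / (1 + t) with hx_def
  have hx0 : 0 < x := by positivity
  have hx1 : x < 1 := by
    rw [hx_def, div_lt_one (by linarith)]
    linarith
  have hxr : x / (1 - x) = 1 / t := by
    rw [hx_def]
    field_simp
    rw [add_sub_cancel_left, div_self ht.ne']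
  have key := partition_card_le_aux (n := n) hx0 hx1
  rw [hxr] at key
  have hxinv : (1:ℝ) / x = 1 + t := by
    rw [hx_def]
    field_simp
  have hcard : (Fintype.card (Nat.Partition n) : ℝ)
      ≤ Real.exp (π ^ 2 / 6 * (1 / t)) * (1 + t) ^ n := by
    have hxn : 0 < x ^ n := pow_pos hx0 n
    rw [← le_div_iff₀ hxn] at key
    refine key.trans ?_
    rw [div_eq_mul_inv, ← inv_pow, ← one_div x, hxinv]
  have hexp : ((1:ℝ) + t) ^ n ≤ Real.exp (n * t) := by
    calc ((1:ℝ) + t) ^ n ≤ (Real.exp t) ^ n := by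
          apply pow_le_pow_left₀ (by linarith) ?_ n
          linarith [Real.add_one_le_exp t]
      _ = Real.exp (n * t) := by rw [← Real.exp_nat_mul]
  have hfinal : π ^ 2 / 6 * (1 / t) + n * t = π * Real.sqrt (2 * n / 3) := by
    have hsqrt : Real.sqrt (2 * n / 3) = 2 * n / s := by
      have h : (2 * (n:ℝ) / 3) = (2 * n / s) ^ 2 := by
        rw [div_pow, hs2]
        field_simp
        ring
      rw [h, Real.sqrt_sq (by positivity)]
    rw [hsqrt, ht_def]
    have hπ : (0:ℝ) < π := Real.pi_pos
    field_simp
    linear_combination hs2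
  calc (Fintype.card (Nat.Partition n) : ℝ)
      ≤ Real.exp (π ^ 2 / 6 * (1 / t)) * (1 + t) ^ n := hcard
    _ ≤ Real.exp (π ^ 2 / 6 * (1 / t)) * Real.exp (n * t) :=
        mul_le_mul_of_nonneg_left hexp (Real.exp_nonneg _)
    _ = Real.exp (π ^ 2 / 6 * (1 / t) + n * t) := (Real.exp_add _ _).symm
    _ = Real.exp (π * Real.sqrt (2 * n / 3)) := by rw [hfinal]
end

section
/- Let b = (b_1,…,b_N) ∈ ℕ_0^N be weakly increasing, q ∈ ℕ, c = 4q+1, and define for a permutation τ of {1,…,N} the quantity S_N(τ) = c Σ_{j=1}^N j (b_{τ(j)} − b_j). Let M(b)! = Π_{k≥0} m(b,k)! where m(b,k) is the number of indices j with b_j = k. Then (1/M(b)!) Σ_{τ ∈ S_N} exp(S_N(τ)) ≤ (1 − e^{−c})^{−(N−1)}. -/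
open Finset Equiv Fin

lemma sumB {ι : Type*} (s : Finset ι) (g : ι → ℕ) (hg : Set.InjOn g s)
    {t : ℝ} (h0 : 0 ≤ t) (h1 : t < 1) :
    ∑ i ∈ s, t ^ g i ≤ (1 - t)⁻¹ := by
  have himg := Finset.sum_image (s := s) (g := g) (f := fun v : ℕ => t ^ v)
    (fun x hx y hy h => hg hx hy h)
  rw [← himg]
  calc ∑ v ∈ s.image g, t ^ v ≤ ∑' v : ℕ, t ^ v :=
        Summable.sum_le_tsum _ (fun i _ => pow_nonneg h0 i)
          (summable_geometric_of_lt_one h0 h1)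
    _ = (1 - t)⁻¹ := tsum_geometric_of_lt_one h0 h1

lemma sumA {N : ℕ} (e : Fin N → ℕ) {t : ℝ} (h0 : 0 ≤ t) (h1 : t < 1) :
    ∑ i : Fin (N + 1), t ^ (∑ j : Fin N, if (i : ℕ) ≤ (j : ℕ) then e j else 0) ≤
      (((Finset.univ.filter fun j : Fin N => e j = 0).card + 1) : ℝ) * (1 - t)⁻¹ := by
  set m := (Finset.univ.filter fun j : Fin N => e j = 0).card with hm
  set E : ℕ → ℕ := fun a => ∑ j : Fin N, if a ≤ (j : ℕ) then e j else 0 with hE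
  set z : ℕ → ℕ := fun a =>
    (Finset.univ.filter fun j : Fin N => a ≤ (j : ℕ) ∧ e j = 0).card with hz
  have hzm : ∀ a, z a ≤ m := by
    intro a
    apply Finset.card_le_card
    intro j hj
    simp only [Finset.mem_filter] at hj ⊢
    exact ⟨hj.1, hj.2.2⟩
  -- key injectivity
  have key : ∀ i i' : Fin (N + 1), (i : ℕ) < (i' : ℕ) → E i = E i' → z i ≠ z i' := by
    intro i i' hlt hEeq
    -- E i = E i' + sum over middle range
    have hsplit : E i = E i' + ∑ j : Fin N, if (i : ℕ) ≤ (j : ℕ) ∧ (j : ℕ) < (i' : ℕ) then e j else 0 := by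
      rw [hE]
      simp only
      rw [← Finset.sum_add_distrib]
      apply Finset.sum_congr rfl
      intro j _
      split_ifs <;> omega
    have hmid : ∀ j : Fin N, (i : ℕ) ≤ (j : ℕ) → (j : ℕ) < (i' : ℕ) → e j = 0 := by
      intro j hj1 hj2
      have : ∑ j : Fin N, (if (i : ℕ) ≤ (j : ℕ) ∧ (j : ℕ) < (i' : ℕ) then e j else 0) = 0 := by omega
      have := Finset.sum_eq_zero_iff.mp this j (Finset.mem_univ j)
      simpa [hj1, hj2] using this
    -- z i > z i'
    have hzsplit : z i = z i' + (Finset.univ.filter fun j : Fin N =>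
        (i : ℕ) ≤ (j : ℕ) ∧ (j : ℕ) < (i' : ℕ) ∧ e j = 0).card := by
      rw [hz]
      simp only [Finset.card_filter]
      rw [← Finset.sum_add_distrib]
      apply Finset.sum_congr rfl
      intro j _
      split_ifs <;> omega
    have hpos : 0 < (Finset.univ.filter fun j : Fin N =>
        (i : ℕ) ≤ (j : ℕ) ∧ (j : ℕ) < (i' : ℕ) ∧ e j = 0).card := by
      apply Finset.card_pos.mpr
      have hiN : (i : ℕ) < N := lt_of_lt_of_le hlt (Nat.lt_succ_iff.mp i'.isLt)
      refine ⟨⟨(i : ℕ), hiN⟩, ?_⟩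
      simp only [Finset.mem_filter, Finset.mem_univ, true_and]
      exact ⟨le_refl _, hlt, hmid _ (le_refl _) hlt⟩
    omega
  -- fiberwise decomposition
  have hdecomp : ∑ i : Fin (N + 1), t ^ E (i : ℕ) =
      ∑ r ∈ Finset.range (m + 1), ∑ i ∈ Finset.univ.filter (fun i : Fin (N+1) => z (i : ℕ) = r),
        t ^ E (i : ℕ) := by
    exact (Finset.sum_fiberwise_of_maps_to
      (g := fun i : Fin (N+1) => z (i : ℕ)) (t := Finset.range (m+1))
      (fun i _ => Finset.mem_range.mpr (Nat.lt_succ_of_le (hzm (i : ℕ))))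
      (fun i => t ^ E (i : ℕ))).symm
  calc ∑ i : Fin (N + 1), t ^ E (i : ℕ)
      = ∑ r ∈ Finset.range (m + 1), ∑ i ∈ Finset.univ.filter (fun i : Fin (N+1) => z (i:ℕ) = r),
          t ^ E (i : ℕ) := hdecomp
    _ ≤ ∑ r ∈ Finset.range (m + 1), (1 - t)⁻¹ := by
        apply Finset.sum_le_sum
        intro r _
        refine sumB _ (fun i : Fin (N+1) => E (i : ℕ)) ?_ h0 h1
        intro x hx y hy hxy
        simp only [Finset.coe_filter, Set.mem_setOf_eq] at hx hy
        rcases lt_trichotomy (x : ℕ) (y : ℕ) with h | h | h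
        · exact absurd (hx.2.trans hy.2.symm) (key x y h hxy)
        · exact Fin.ext h
        · exact absurd (hy.2.trans hx.2.symm) (key y x h hxy.symm)
    _ = (m + 1 : ℝ) * (1 - t)⁻¹ := by
        rw [Finset.sum_const, Finset.card_range, nsmul_eq_mul]
        push_cast
        ring

section decomp

variable {N : ℕ}

/-- The permutation putting `last` at position `i` and `σ` (order-preservingly) elsewhere. -/
def Phi (i : Fin (N + 1)) (σ : Equiv.Perm (Fin N)) : Equiv.Perm (Fin (N + 1)) :=
  (finSuccEquiv' i).trans ((Equiv.optionCongr σ).trans finSuccEquivLast.symm)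

@[simp] lemma Phi_apply_self (i : Fin (N + 1)) (σ : Equiv.Perm (Fin N)) :
    Phi i σ i = Fin.last N := by
  simp [Phi]

@[simp] lemma Phi_apply_succAbove (i : Fin (N + 1)) (σ : Equiv.Perm (Fin N)) (j : Fin N) :
    Phi i σ (i.succAbove j) = Fin.castSucc (σ j) := by
  simp [Phi]

lemma Phi_bijective :
    Function.Bijective (fun p : Fin (N + 1) × Equiv.Perm (Fin N) => Phi p.1 p.2) := by
  rw [Fintype.bijective_iff_injective_and_card]
  constructor
  · rintro ⟨i, σ⟩ ⟨i', σ'⟩ h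
    simp only at h
    have hi : i = i' := by
      have h1 : Phi i σ i = Fin.last N := Phi_apply_self i σ
      have h2 : Phi i σ i' = Fin.last N := by rw [h]; exact Phi_apply_self i' σ'
      exact (Phi i σ).injective (h1.trans h2.symm)
    subst hi
    have hσ : σ = σ' := by
      ext j
      have := congrArg (fun τ : Equiv.Perm (Fin (N+1)) => τ (i.succAbove j)) h
      simp only [Phi_apply_succAbove] at this
      exact congrArg Fin.val (Fin.castSucc_injective N this)
    rw [hσ]
  · simp [Fintype.card_perm, Fintype.card_prod, Nat.factorial_succ]

end decomp

lemma count_ge (a N : ℕ) :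
    (∑ j ∈ Finset.range N, if a ≤ j then (1 : ℕ) else 0) = N - a := by
  induction N with
  | zero => simp
  | succ n ih => rw [Finset.sum_range_succ, ih]; split_ifs <;> omega

lemma count_ge_real (a N : ℕ) (x : ℝ) :
    (∑ j : Fin N, if a ≤ (j : ℕ) then x else 0) = ((N - a : ℕ) : ℝ) * x := by
  have h : (∑ j : Fin N, if a ≤ (j : ℕ) then x else 0)
      = (∑ j : Fin N, if a ≤ (j : ℕ) then (1:ℕ) else 0 : ℕ) * x := by
    rw [Nat.cast_sum, Finset.sum_mul]
    apply Finset.sum_congr rfl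
    intro j _
    split_ifs <;> simp
  rw [h, Fin.sum_univ_eq_sum_range (fun j => if a ≤ j then (1:ℕ) else 0), count_ge]

/-- Key identity: effect of `Phi i σ` on the weighted sum. -/
lemma keysum {N : ℕ} (b : Fin (N + 1) → ℕ) (hb : Monotone b) (i : Fin (N + 1))
    (σ : Equiv.Perm (Fin N)) :
    (∑ j : Fin (N + 1), ((j : ℕ) + 1 : ℝ) * ((b (Phi i σ j) : ℝ) - (b j : ℝ)))
      = (∑ j : Fin N, ((j : ℕ) + 1 : ℝ) * ((b (Fin.castSucc (σ j)) : ℝ) - (b (Fin.castSucc j) : ℝ)))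
        - ((∑ j : Fin N, if (i : ℕ) ≤ (j : ℕ) then
            (b (Fin.last N) - b (Fin.castSucc (σ j))) else 0 : ℕ) : ℝ) := by
  have hble : ∀ j : Fin N, b (Fin.castSucc (σ j)) ≤ b (Fin.last N) := fun j => hb (Fin.le_last _)
  set L : ℝ := (b (Fin.last N) : ℝ) with hL
  -- cast the subtracted ℕ-sum into ℝ
  have hcast : ((∑ j : Fin N, if (i : ℕ) ≤ (j : ℕ) then
      (b (Fin.last N) - b (Fin.castSucc (σ j))) else 0 : ℕ) : ℝ)
      = ∑ j : Fin N, (if (i : ℕ) ≤ (j : ℕ) then (L - (b (Fin.castSucc (σ j)) : ℝ)) else 0) := by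
    rw [Nat.cast_sum]
    apply Finset.sum_congr rfl
    intro j _
    split_ifs with h
    · rw [Nat.cast_sub (hble j)]
    · simp
  rw [hcast]
  -- split the LHS as A - B
  have hsplit : (∑ j : Fin (N + 1), ((j : ℕ) + 1 : ℝ) * ((b (Phi i σ j) : ℝ) - (b j : ℝ)))
      = (∑ j : Fin (N + 1), ((j : ℕ) + 1 : ℝ) * (b (Phi i σ j) : ℝ))
        - ∑ j : Fin (N + 1), ((j : ℕ) + 1 : ℝ) * (b j : ℝ) := by
    rw [← Finset.sum_sub_distrib]
    exact Finset.sum_congr rfl fun j _ => by ring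
  have hval : ∀ j : Fin N, ((i.succAbove j : Fin (N + 1)) : ℕ)
      = if (i : ℕ) ≤ (j : ℕ) then (j : ℕ) + 1 else (j : ℕ) := by
    intro j
    rcases le_or_gt (i : ℕ) (j : ℕ) with h | h
    · rw [if_pos h, Fin.succAbove_of_le_castSucc _ _ (by rwa [Fin.le_def, Fin.coe_castSucc]),
        Fin.val_succ]
    · rw [if_neg (by omega), Fin.succAbove_of_castSucc_lt _ _ (by rwa [Fin.lt_def, Fin.coe_castSucc]),
        Fin.coe_castSucc]
  have hA : (∑ j : Fin (N + 1), ((j : ℕ) + 1 : ℝ) * (b (Phi i σ j) : ℝ))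
      = ((i : ℕ) + 1 : ℝ) * L
        + ((∑ j : Fin N, ((j : ℕ) + 1 : ℝ) * (b (Fin.castSucc (σ j)) : ℝ))
          + ∑ j : Fin N, (if (i : ℕ) ≤ (j : ℕ) then (b (Fin.castSucc (σ j)) : ℝ) else 0)) := by
    rw [Fin.sum_univ_succAbove (fun j => ((j : ℕ) + 1 : ℝ) * (b (Phi i σ j) : ℝ)) i]
    rw [Phi_apply_self, ← Finset.sum_add_distrib]
    congr 1
    apply Finset.sum_congr rfl
    intro j _
    rw [Phi_apply_succAbove, hval j]
    split_ifs with h <;> push_cast <;> ring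
  have hB : (∑ j : Fin (N + 1), ((j : ℕ) + 1 : ℝ) * (b j : ℝ))
      = ((N : ℝ) + 1) * L + ∑ j : Fin N, ((j : ℕ) + 1 : ℝ) * (b (Fin.castSucc j) : ℝ) := by
    rw [Fin.sum_univ_succAbove (fun j => ((j : ℕ) + 1 : ℝ) * (b j : ℝ)) (Fin.last N)]
    simp [Fin.succAbove_last, Fin.val_last, hL]
  have hsub : ∑ j : Fin N, (if (i : ℕ) ≤ (j : ℕ) then (L - (b (Fin.castSucc (σ j)) : ℝ)) else 0)
      = ((N - (i : ℕ) : ℕ) : ℝ) * L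
        - ∑ j : Fin N, (if (i : ℕ) ≤ (j : ℕ) then (b (Fin.castSucc (σ j)) : ℝ) else 0) := by
    rw [← count_ge_real (i : ℕ) N L, ← Finset.sum_sub_distrib]
    apply Finset.sum_congr rfl
    intro j _
    split_ifs <;> ring
  have hS : (∑ j : Fin N, ((j : ℕ) + 1 : ℝ)
        * ((b (Fin.castSucc (σ j)) : ℝ) - (b (Fin.castSucc j) : ℝ)))
      = (∑ j : Fin N, ((j : ℕ) + 1 : ℝ) * (b (Fin.castSucc (σ j)) : ℝ))
        - ∑ j : Fin N, ((j : ℕ) + 1 : ℝ) * (b (Fin.castSucc j) : ℝ) := by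
    rw [← Finset.sum_sub_distrib]
    exact Finset.sum_congr rfl fun j _ => by ring
  rw [hsplit, hA, hB, hsub, hS]
  have hiN : (i : ℕ) ≤ N := Nat.lt_succ_iff.mp i.isLt
  rw [Nat.cast_sub hiN]
  ring

lemma count_rel {N : ℕ} (b : Fin (N + 1) → ℕ) (k : ℕ) :
    (Finset.univ.filter fun j : Fin (N + 1) => b j = k).card
      = (Finset.univ.filter fun j : Fin N => b (Fin.castSucc j) = k).card
        + if b (Fin.last N) = k then 1 else 0 := by
  rw [Finset.card_filter, Finset.card_filter,
    Fin.sum_univ_castSucc (fun j : Fin (N+1) => if b j = k then (1:ℕ) else 0)]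

lemma image_rel {N : ℕ} (b : Fin (N + 1) → ℕ) :
    Finset.image b Finset.univ
      = insert (b (Fin.last N)) (Finset.image (fun j : Fin N => b (Fin.castSucc j)) Finset.univ) := by
  ext k
  simp only [Finset.mem_image, Finset.mem_insert, Finset.mem_univ, true_and]
  constructor
  · rintro ⟨j, rfl⟩
    rcases Fin.eq_castSucc_or_eq_last j with ⟨j', rfl⟩ | rfl
    · exact Or.inr ⟨j', rfl⟩
    · exact Or.inl rfl
  · rintro (rfl | ⟨j, rfl⟩)
    · exact ⟨Fin.last N, rfl⟩
    · exact ⟨Fin.castSucc j, rfl⟩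

lemma factC {N : ℕ} (b : Fin (N + 1) → ℕ) :
    (∏ k ∈ Finset.image b Finset.univ,
        Nat.factorial (Finset.univ.filter fun j : Fin (N + 1) => b j = k).card)
      = ((Finset.univ.filter fun j : Fin N =>
            b (Fin.castSucc j) = b (Fin.last N)).card + 1)
        * ∏ k ∈ Finset.image (fun j : Fin N => b (Fin.castSucc j)) Finset.univ,
            Nat.factorial (Finset.univ.filter fun j : Fin N => b (Fin.castSucc j) = k).card := by
  classical
  have hcnt : ∀ k, (Finset.univ.filter fun j : Fin (N + 1) => b j = k).card
      = (Finset.univ.filter fun j : Fin N => b (Fin.castSucc j) = k).card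
        + if b (Fin.last N) = k then 1 else 0 := count_rel b
  set b₀ : Fin N → ℕ := fun j => b (Fin.castSucc j) with hb₀
  set L := b (Fin.last N) with hLdef
  set I₀ := Finset.image b₀ Finset.univ with hI₀
  set m := (Finset.univ.filter fun j : Fin N => b₀ j = L).card with hmdef
  by_cases hmem : L ∈ I₀
  · have himg : Finset.image b Finset.univ = I₀ := by
      rw [image_rel b, Finset.insert_eq_self.mpr hmem]
    rw [himg,
      ← Finset.mul_prod_erase I₀ _ hmem,
      ← Finset.mul_prod_erase I₀
        (fun k => Nat.factorial (Finset.univ.filter fun j : Fin N => b₀ j = k).card) hmem]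
    have h1 : (Finset.univ.filter fun j : Fin (N + 1) => b j = L).card = m + 1 := by
      rw [hcnt L, if_pos rfl, hmdef]
    have h3 : (∏ k ∈ I₀.erase L,
          Nat.factorial (Finset.univ.filter fun j : Fin (N + 1) => b j = k).card)
        = ∏ k ∈ I₀.erase L,
          Nat.factorial (Finset.univ.filter fun j : Fin N => b₀ j = k).card := by
      apply Finset.prod_congr rfl
      intro k hk
      rw [hcnt k, if_neg (Finset.ne_of_mem_erase hk).symm, add_zero]
    rw [h1, h3, Nat.factorial_succ]
    ring
  · have hm0 : m = 0 := by
      rw [hmdef, Finset.card_eq_zero, Finset.filter_eq_empty_iff]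
      intro j _ h
      exact hmem (Finset.mem_image.mpr ⟨j, Finset.mem_univ j, h⟩)
    have himg : Finset.image b Finset.univ = insert L I₀ := image_rel b
    rw [himg, Finset.prod_insert hmem]
    have h1 : (Finset.univ.filter fun j : Fin (N + 1) => b j = L).card = 1 := by
      rw [hcnt L, if_pos rfl, ← hmdef, hm0]
    have h3 : (∏ k ∈ I₀,
          Nat.factorial (Finset.univ.filter fun j : Fin (N + 1) => b j = k).card)
        = ∏ k ∈ I₀,
          Nat.factorial (Finset.univ.filter fun j : Fin N => b₀ j = k).card := by
      apply Finset.prod_congr rfl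
      intro k hk
      rw [hcnt k, if_neg (by rintro rfl; exact hmem hk), add_zero]
    rw [h1, h3, hm0]
    simp [hb₀]

lemma aux_bound (c : ℝ) (hc : 0 < c) :
    ∀ N, ∀ b : Fin N → ℕ, Monotone b →
    (∑ τ : Equiv.Perm (Fin N),
        Real.exp (c * ∑ j : Fin N, ((j : ℕ) + 1 : ℝ) * ((b (τ j) : ℝ) - (b j : ℝ))))
      ≤ ((∏ k ∈ Finset.image b Finset.univ,
          Nat.factorial (Finset.univ.filter fun j : Fin N => b j = k).card : ℕ) : ℝ)
        * ((1 - Real.exp (-c)) ^ (N - 1))⁻¹ := by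
  have ht0 : (0:ℝ) < Real.exp (-c) := Real.exp_pos _
  have ht1 : Real.exp (-c) < 1 := Real.exp_lt_one_iff.mpr (by linarith)
  set t := Real.exp (-c) with htdef
  have h1t : (0:ℝ) < 1 - t := by linarith
  intro N
  induction N with
  | zero =>
    intro b hb
    simp
  | succ N ih =>
    intro b hb
    have hMpos : ∀ {M : ℕ} (b' : Fin M → ℕ),
        (1:ℝ) ≤ ((∏ k ∈ Finset.image b' Finset.univ,
          Nat.factorial (Finset.univ.filter fun j : Fin M => b' j = k).card : ℕ) : ℝ) := by
      intro M b'
      exact_mod_cast Nat.one_le_iff_ne_zero.mpr (Nat.pos_iff_ne_zero.mp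
        (Finset.prod_pos fun k _ => Nat.factorial_pos _))
    rcases Nat.eq_zero_or_pos N with rfl | hN
    · -- N + 1 = 1 : trivial case
      have h1 : ∀ τ : Equiv.Perm (Fin 1),
          (∑ j : Fin 1, ((j : ℕ) + 1 : ℝ) * ((b (τ j) : ℝ) - (b j : ℝ))) = 0 := by
        intro τ
        rw [Fin.sum_univ_one, Subsingleton.elim (τ 0) 0]
        ring
      have h2 : (∑ τ : Equiv.Perm (Fin 1),
          Real.exp (c * ∑ j : Fin 1, ((j : ℕ) + 1 : ℝ) * ((b (τ j) : ℝ) - (b j : ℝ)))) = 1 := by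
        rw [Finset.sum_congr rfl fun τ _ => by rw [h1 τ, mul_zero, Real.exp_zero]]
        simp [Finset.card_univ]
      rw [h2]
      simpa using hMpos b
    · -- main induction step
      have hmono : Monotone (fun j : Fin N => b (Fin.castSucc j)) :=
        fun x y h => hb (Fin.castSucc_le_castSucc_iff.mpr h)
      have IH : (∑ σ : Equiv.Perm (Fin N),
          Real.exp (c * ∑ j : Fin N, ((j : ℕ) + 1 : ℝ)
            * ((b (Fin.castSucc (σ j)) : ℝ) - (b (Fin.castSucc j) : ℝ))))
          ≤ ((∏ k ∈ Finset.image (fun j : Fin N => b (Fin.castSucc j)) Finset.univ,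
              Nat.factorial (Finset.univ.filter
                fun j : Fin N => b (Fin.castSucc j) = k).card : ℕ) : ℝ)
            * ((1 - t) ^ (N - 1))⁻¹ := by
        simpa using ih (fun j => b (Fin.castSucc j)) hmono
      set m := (Finset.univ.filter fun j : Fin N =>
        b (Fin.castSucc j) = b (Fin.last N)).card with hmdef
      have hble : ∀ j : Fin (N + 1), b j ≤ b (Fin.last N) := fun j => hb (Fin.le_last _)
      -- per-σ count identity
      have hcard : ∀ σ : Equiv.Perm (Fin N),
          (Finset.univ.filter fun j : Fin N =>
            b (Fin.last N) - b (Fin.castSucc (σ j)) = 0).card = m := by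
        intro σ
        have heq : (Finset.univ.filter fun j : Fin N =>
            b (Fin.last N) - b (Fin.castSucc (σ j)) = 0)
            = (Finset.univ.filter fun j : Fin N =>
              b (Fin.castSucc (σ j)) = b (Fin.last N)) := by
          apply Finset.filter_congr
          intro j _
          constructor
          · intro h
            exact le_antisymm (hble _) (Nat.sub_eq_zero_iff_le.mp h)
          · intro h
            simp [h]
        rw [heq, hmdef]
        apply Finset.card_bij (fun j _ => σ j)
        · intro j hj
          simp only [Finset.mem_filter, Finset.mem_univ, true_and] at hj ⊢
          exact hj
        · intro j₁ _ j₂ _ h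
          exact σ.injective h
        · intro k hk
          simp only [Finset.mem_filter, Finset.mem_univ, true_and] at hk
          exact ⟨σ.symm k, by simp [Finset.mem_filter, hk], by simp⟩
      -- the per-term rewriting
      have hterm : ∀ (i : Fin (N + 1)) (σ : Equiv.Perm (Fin N)),
          Real.exp (c * ∑ j : Fin (N + 1), ((j : ℕ) + 1 : ℝ)
            * ((b (Phi i σ j) : ℝ) - (b j : ℝ)))
          = Real.exp (c * ∑ j : Fin N, ((j : ℕ) + 1 : ℝ)
              * ((b (Fin.castSucc (σ j)) : ℝ) - (b (Fin.castSucc j) : ℝ)))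
            * t ^ (∑ j : Fin N, if (i : ℕ) ≤ (j : ℕ) then
                (b (Fin.last N) - b (Fin.castSucc (σ j))) else 0) := by
        intro i σ
        rw [keysum b hb i σ, mul_sub, sub_eq_add_neg, Real.exp_add]
        congr 1
        rw [show -(c * ((∑ j : Fin N, if (i : ℕ) ≤ (j : ℕ) then
            (b (Fin.last N) - b (Fin.castSucc (σ j))) else 0 : ℕ) : ℝ))
          = ((∑ j : Fin N, if (i : ℕ) ≤ (j : ℕ) then
            (b (Fin.last N) - b (Fin.castSucc (σ j))) else 0 : ℕ) : ℝ) * (-c) by ring]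
        rw [htdef, ← Real.exp_nat_mul]
      calc (∑ τ : Equiv.Perm (Fin (N + 1)),
            Real.exp (c * ∑ j : Fin (N + 1), ((j : ℕ) + 1 : ℝ) * ((b (τ j) : ℝ) - (b j : ℝ))))
          = ∑ p : Fin (N + 1) × Equiv.Perm (Fin N),
              Real.exp (c * ∑ j : Fin (N + 1), ((j : ℕ) + 1 : ℝ)
                * ((b (Phi p.1 p.2 j) : ℝ) - (b j : ℝ))) :=
            (Fintype.sum_bijective _ Phi_bijective _ _ fun p => rfl).symm
        _ = ∑ σ : Equiv.Perm (Fin N), ∑ i : Fin (N + 1),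
              Real.exp (c * ∑ j : Fin (N + 1), ((j : ℕ) + 1 : ℝ)
                * ((b (Phi i σ j) : ℝ) - (b j : ℝ))) := by
            rw [Fintype.sum_prod_type]
            exact Finset.sum_comm
        _ = ∑ σ : Equiv.Perm (Fin N),
              Real.exp (c * ∑ j : Fin N, ((j : ℕ) + 1 : ℝ)
                * ((b (Fin.castSucc (σ j)) : ℝ) - (b (Fin.castSucc j) : ℝ)))
              * ∑ i : Fin (N + 1), t ^ (∑ j : Fin N, if (i : ℕ) ≤ (j : ℕ) then
                  (b (Fin.last N) - b (Fin.castSucc (σ j))) else 0) := by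
            apply Finset.sum_congr rfl
            intro σ _
            rw [Finset.mul_sum]
            exact Finset.sum_congr rfl fun i _ => hterm i σ
        _ ≤ ∑ σ : Equiv.Perm (Fin N),
              Real.exp (c * ∑ j : Fin N, ((j : ℕ) + 1 : ℝ)
                * ((b (Fin.castSucc (σ j)) : ℝ) - (b (Fin.castSucc j) : ℝ)))
              * (((m : ℝ) + 1) * (1 - t)⁻¹) := by
            apply Finset.sum_le_sum
            intro σ _
            apply mul_le_mul_of_nonneg_left _ (Real.exp_pos _).le
            have := sumA (fun j : Fin N => b (Fin.last N) - b (Fin.castSucc (σ j)))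
              ht0.le ht1
            rw [hcard σ] at this
            exact this
        _ = (((m : ℝ) + 1) * (1 - t)⁻¹) * ∑ σ : Equiv.Perm (Fin N),
              Real.exp (c * ∑ j : Fin N, ((j : ℕ) + 1 : ℝ)
                * ((b (Fin.castSucc (σ j)) : ℝ) - (b (Fin.castSucc j) : ℝ))) := by
            rw [← Finset.sum_mul, mul_comm]
        _ ≤ (((m : ℝ) + 1) * (1 - t)⁻¹)
            * (((∏ k ∈ Finset.image (fun j : Fin N => b (Fin.castSucc j)) Finset.univ,
                Nat.factorial (Finset.univ.filter
                  fun j : Fin N => b (Fin.castSucc j) = k).card : ℕ) : ℝ)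
              * ((1 - t) ^ (N - 1))⁻¹) := by
            apply mul_le_mul_of_nonneg_left IH
            positivity
        _ = ((∏ k ∈ Finset.image b Finset.univ,
              Nat.factorial (Finset.univ.filter
                fun j : Fin (N + 1) => b j = k).card : ℕ) : ℝ)
            * ((1 - t) ^ (N + 1 - 1))⁻¹ := by
            rw [factC b, ← hmdef]
            have hpow : (1 - t) ^ (N + 1 - 1) = (1 - t) * (1 - t) ^ (N - 1) := by
              rw [Nat.add_sub_cancel]
              conv_lhs => rw [← Nat.succ_pred_eq_of_pos hN]
              rw [pow_succ, mul_comm, Nat.pred_eq_sub_one]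
            rw [hpow, mul_inv]
            push_cast
            ring

/-- Bound on the permutation sum: with `c = 4q+1`, `S_N(τ) = c Σ_j j (b_{τ(j)} − b_j)`
and `M(b)! = Π_k m(b,k)!` the product of factorials of occupation numbers,
`(1/M(b)!) Σ_{τ ∈ S_N} exp(S_N(τ)) ≤ (1 − e^{−c})^{−(N−1)}`. -/
theorem permutation_sum_bound (q N : ℕ) (hq : 1 ≤ q)
    (b : Fin N → ℕ) (hb : Monotone b) :
    (1 / ((∏ k ∈ Finset.image b Finset.univ,
        Nat.factorial (Finset.univ.filter fun j : Fin N => b j = k).card : ℕ) : ℝ)) *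
      ∑ τ : Equiv.Perm (Fin N),
        Real.exp ((4 * q + 1 : ℝ) *
          ∑ j : Fin N, ((j : ℕ) + 1 : ℝ) * ((b (τ j) : ℝ) - (b j : ℝ))) ≤
      ((1 - Real.exp (-(4 * q + 1 : ℝ))) ^ (N - 1))⁻¹ := by
  have hc : (0:ℝ) < 4 * q + 1 := by positivity
  have haux := aux_bound (4 * q + 1 : ℝ) hc N b hb
  have hMpos : (0:ℝ) < ((∏ k ∈ Finset.image b Finset.univ,
      Nat.factorial (Finset.univ.filter fun j : Fin N => b j = k).card : ℕ) : ℝ) := by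
    exact_mod_cast Finset.prod_pos fun k _ => Nat.factorial_pos _
  rw [one_div, inv_mul_le_iff₀ hMpos]
  calc (∑ τ : Equiv.Perm (Fin N),
        Real.exp ((4 * q + 1 : ℝ) *
          ∑ j : Fin N, ((j : ℕ) + 1 : ℝ) * ((b (τ j) : ℝ) - (b j : ℝ))))
      ≤ ((∏ k ∈ Finset.image b Finset.univ,
          Nat.factorial (Finset.univ.filter fun j : Fin N => b j = k).card : ℕ) : ℝ)
        * ((1 - Real.exp (-(4 * q + 1 : ℝ))) ^ (N - 1))⁻¹ := haux
    _ = _ := by rw [mul_comm]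
end

section
/- Let q ∈ ℕ, N ∈ ℕ, and b ∈ ℕ_0^N weakly increasing with root partition λ_j = q(j−1)+b_j. The number of partitions μ with μ ⪯ λ^{(q)}_N(b) in dominance order is at most p(qN(N−1)/2 + (N−1)(b_N − b_1)), where p is the integer partition counting function. Consequently it is at most exp(π √(2/3) · (q(N−1) + b_N − b_1)) for q ≥ 1. -/
/-- A monotone function into a linear order is determined by its multiset of values. -/
lemma monotone_eq_of_map_univ_val_eq {n : ℕ} {α : Type*} [LinearOrder α] {f g : Fin n → α}
    (hf : Monotone f) (hg : Monotone g)
    (h : Multiset.map f Finset.univ.val = Multiset.map g Finset.univ.val) : f = g := by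
  rw [show Multiset.map f Finset.univ.val = Finset.univ.val.map f from rfl, Fin.univ_val_map,
    show Multiset.map g Finset.univ.val = Finset.univ.val.map g from rfl, Fin.univ_val_map] at h
  exact List.ofFn_injective <| List.Perm.eq_of_sortedLE hf.sortedLE_ofFn hg.sortedLE_ofFn
    (Multiset.coe_eq_coe.mp h)

/-- Every multiset of naturals is its positive part plus the appropriate number of zeros. -/
lemma multiset_eq_filter_add_replicate (B : Multiset ℕ) :
    B = B.filter (· ≠ 0) +
      Multiset.replicate (Multiset.card B - Multiset.card (B.filter (· ≠ 0))) 0 := by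
  conv_lhs => rw [← Multiset.filter_add_not (· ≠ 0) B]
  congr 1
  have hall : ∀ x ∈ B.filter (fun x => ¬x ≠ 0), x = 0 := fun x hx =>
    not_not.mp (Multiset.mem_filter.mp hx).2
  rw [Multiset.eq_replicate_card.mpr hall]
  congr 1
  have := congrArg Multiset.card (Multiset.filter_add_not (· ≠ 0) B)
  rw [Multiset.card_add] at this
  omega

set_option maxHeartbeats 1000000 in
/-- The number of partitions dominated by the root partition `λ^{(q)}_N(b)` is at most
`p(qN(N−1)/2 + (N−1)(b_N − b_1))`, and hence at most
`exp(π √(2/3) (q(N−1) + b_N − b_1))`. -/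
theorem count_dominated_partitions (q N : ℕ) (hq : 1 ≤ q) (hN : 1 ≤ N)
    (b : Fin N → ℕ) (hb : Monotone b) :
    Set.ncard {μ : Fin N → ℕ | Monotone μ ∧
        (∑ j, μ j = ∑ j : Fin N, (q * (j : ℕ) + b j)) ∧
        DominatedBy μ (fun j => q * (j : ℕ) + b j)} ≤
      Fintype.card (Nat.Partition
        (q * (N * (N - 1) / 2) + (N - 1) * (b ⟨N - 1, by omega⟩ - b ⟨0, by omega⟩))) ∧
    (Set.ncard {μ : Fin N → ℕ | Monotone μ ∧
        (∑ j, μ j = ∑ j : Fin N, (q * (j : ℕ) + b j)) ∧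
        DominatedBy μ (fun j => q * (j : ℕ) + b j)} : ℝ) ≤
      Real.exp (Real.pi * Real.sqrt (2 / 3) *
        ((q * (N - 1) : ℕ) + (b ⟨N - 1, by omega⟩ : ℝ) - (b ⟨0, by omega⟩ : ℝ))) := by
  classical
  set S := {μ : Fin N → ℕ | Monotone μ ∧
      (∑ j, μ j = ∑ j : Fin N, (q * (j : ℕ) + b j)) ∧
      DominatedBy μ (fun j => q * (j : ℕ) + b j)} with hSdef
  rcases eq_or_lt_of_le hN with h1 | h2
  · -- N = 1
    subst h1
    have hS : S = {(fun _ => b ⟨0, by omega⟩ : Fin 1 → ℕ)} := by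
      ext μ
      simp only [hSdef, Set.mem_setOf_eq, Set.mem_singleton_iff]
      constructor
      · rintro ⟨-, hsum, -⟩
        funext j
        have hj : j = ⟨0, by omega⟩ := Subsingleton.elim _ _
        subst hj
        simpa using hsum
      · rintro rfl
        refine ⟨monotone_const, by simp, fun i => ?_⟩
        have hI : Finset.Ici i = Finset.univ :=
          Finset.eq_univ_of_forall fun x => Finset.mem_Ici.mpr (le_of_eq (Subsingleton.elim i x))
        rw [hI]
        simp
    rw [hS, Set.ncard_singleton]
    constructor
    · have : Nonempty (Nat.Partition (q * (1 * (1 - 1) / 2) + (1 - 1) *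
          (b ⟨1 - 1, by omega⟩ - b ⟨0, by omega⟩))) :=
        ⟨⟨0, fun h => absurd h (Multiset.notMem_zero _), by simp⟩⟩
      exact Fintype.card_pos
    · have hzero : ((q * (1 - 1) : ℕ) : ℝ) + (b ⟨1 - 1, by omega⟩ : ℝ)
          - (b ⟨0, by omega⟩ : ℝ) = 0 := by
        rw [show (⟨1 - 1, by omega⟩ : Fin 1) = ⟨0, by omega⟩ from rfl]
        norm_num
      rw [hzero, mul_zero, Real.exp_zero]
      norm_num
  · -- N ≥ 2
    obtain ⟨i0, hi0⟩ : ∃ i : Fin N, (i : ℕ) = 0 := ⟨⟨0, by omega⟩, rfl⟩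
    obtain ⟨iL, hiL⟩ : ∃ i : Fin N, (i : ℕ) = N - 1 := ⟨⟨N - 1, by omega⟩, rfl⟩
    obtain ⟨i1, hi1⟩ : ∃ i : Fin N, (i : ℕ) = 1 := ⟨⟨1, by omega⟩, rfl⟩
    have e0 : (⟨0, by omega⟩ : Fin N) = i0 := Fin.ext hi0.symm
    have eL : (⟨N - 1, by omega⟩ : Fin N) = iL := Fin.ext hiL.symm
    rw [e0, eL]
    set d := b iL - b i0 with hd
    set K := q * (N - 1) + d with hK
    set n₀ := q * (N * (N - 1) / 2) + (N - 1) * d with hn0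
    have hbb : b i0 ≤ b iL := hb (by rw [Fin.le_def]; omega)
    -- lower bound on entries
    have hIci1 : Finset.Ici i1 = Finset.univ.erase i0 := by
      ext j
      simp only [Finset.mem_Ici, Finset.mem_erase, Finset.mem_univ, and_true, Fin.le_def,
        Ne, Fin.ext_iff]
      omega
    have lb : ∀ μ : Fin N → ℕ, μ ∈ S → ∀ j, b i0 ≤ μ j := by
      intro μ hμ j
      obtain ⟨hm, hsum, hdom⟩ := hμ
      have hi0j : i0 ≤ j := by rw [Fin.le_def]; omega
      refine le_trans ?_ (hm hi0j)
      have h1 := hdom i1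
      have e1 : ∑ j, μ j = μ i0 + ∑ j ∈ Finset.Ici i1, μ j := by
        rw [hIci1]
        exact (Finset.add_sum_erase _ μ (Finset.mem_univ i0)).symm
      have e2 : ∑ j : Fin N, (q * (j : ℕ) + b j)
          = (q * (i0 : ℕ) + b i0) + ∑ j ∈ Finset.Ici i1, (q * (j : ℕ) + b j) := by
        rw [hIci1]
        exact (Finset.add_sum_erase _ (fun j : Fin N => q * (j : ℕ) + b j)
          (Finset.mem_univ i0)).symm
      simp only at h1
      rw [hi0, Nat.mul_zero, Nat.zero_add] at e2
      omega
    -- upper bound on entries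
    have hIciL : Finset.Ici iL = {iL} := by
      ext j
      simp only [Finset.mem_Ici, Finset.mem_singleton, Fin.le_def, Fin.ext_iff]
      have := j.isLt
      omega
    have ub : ∀ μ : Fin N → ℕ, μ ∈ S → ∀ j, μ j ≤ K + b i0 := by
      intro μ hμ j
      obtain ⟨hm, hsum, hdom⟩ := hμ
      have hjL : j ≤ iL := by
        rw [Fin.le_def]
        have := j.isLt
        omega
      have h1 := hdom iL
      rw [hIciL, Finset.sum_singleton, Finset.sum_singleton] at h1
      simp only [hiL] at h1
      have h2 := hm hjL
      omega
    -- sums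
    have key : ∀ f : Fin N → ℕ, (∀ j, b i0 ≤ f j) →
        (∑ j, (f j - b i0)) + N * b i0 = ∑ j, f j := by
      intro f hf
      calc (∑ j, (f j - b i0)) + N * b i0
          = ∑ j, ((f j - b i0) + b i0) := by
            rw [Finset.sum_add_distrib, Finset.sum_const, Finset.card_univ, Fintype.card_fin,
              smul_eq_mul]
        _ = ∑ j, f j := Finset.sum_congr rfl fun j _ => Nat.sub_add_cancel (hf j)
    have hlam_lb : ∀ j : Fin N, b i0 ≤ q * (j : ℕ) + b j := fun j =>
      le_trans (hb (by rw [Fin.le_def]; omega)) (Nat.le_add_left _ _)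
    set M := ∑ j : Fin N, ((q * (j : ℕ) + b j) - b i0) with hMdef
    have hMsum : ∀ μ : Fin N → ℕ, μ ∈ S → ∑ j, (μ j - b i0) = M := by
      intro μ hμ
      have h1 := key μ (lb μ hμ)
      have h2 := key (fun j : Fin N => q * (j : ℕ) + b j) hlam_lb
      have hsum := hμ.2.1
      omega
    have hMle : M ≤ n₀ := by
      have e : ∀ j : Fin N, (q * (j : ℕ) + b j) - b i0 = q * (j : ℕ) + (b j - b i0) := by
        intro j
        have := hb (show i0 ≤ j by rw [Fin.le_def]; omega)
        omega
      have hM1 : M = q * (∑ j : Fin N, (j : ℕ)) + ∑ j : Fin N, (b j - b i0) := by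
        rw [hMdef, Finset.sum_congr rfl fun j _ => e j, Finset.sum_add_distrib,
          Finset.mul_sum]
      have h1 : ∑ j : Fin N, (j : ℕ) = N * (N - 1) / 2 := by
        rw [Fin.sum_univ_eq_sum_range (fun i => i) N, Finset.sum_range_id]
      have h2 : ∑ j : Fin N, (b j - b i0) ≤ (N - 1) * d := by
        have e0' : ∑ j : Fin N, (b j - b i0)
            = (b i0 - b i0) + ∑ j ∈ Finset.univ.erase i0, (b j - b i0) :=
          (Finset.add_sum_erase _ _ (Finset.mem_univ i0)).symm
        rw [e0', Nat.sub_self, Nat.zero_add]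
        refine le_trans (Finset.sum_le_card_nsmul _ _ d ?_) ?_
        · intro x _
          have hx : x ≤ iL := by
            rw [Fin.le_def]
            have := x.isLt
            omega
          exact Nat.sub_le_sub_right (hb hx) _
        · rw [smul_eq_mul, Finset.card_erase_of_mem (Finset.mem_univ i0), Finset.card_univ,
            Fintype.card_fin]
      rw [hn0, hM1, h1]
      exact Nat.add_le_add_left h2 _
    -- Injection into partitions of n₀
    have hsum1 : ∀ μ : ↥S,
        (Multiset.map (fun j => μ.1 j - b i0) Finset.univ.val
          + Multiset.replicate (n₀ - M) 1).sum = n₀ := by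
      intro μ
      rw [Multiset.sum_add, Multiset.sum_replicate, smul_eq_mul, mul_one]
      have h : (Multiset.map (fun j => μ.1 j - b i0) Finset.univ.val).sum
          = ∑ j, (μ.1 j - b i0) := rfl
      rw [h, hMsum μ.1 μ.2]
      omega
    have hcardA : ∀ μ : Fin N → ℕ,
        Multiset.card (Multiset.map (fun j => μ j - b i0) Finset.univ.val) = N := by
      intro μ
      rw [Multiset.card_map]
      rw [show Multiset.card (Finset.univ.val : Multiset (Fin N)) = Finset.univ.card from rfl,
        Finset.card_univ, Fintype.card_fin]
    have hmonoA : ∀ μ : Fin N → ℕ, μ ∈ S → Monotone (fun j => μ j - b i0) := by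
      intro μ hμ x y hxy
      exact Nat.sub_le_sub_right (hμ.1 hxy) _
    have part1 : S.ncard ≤ Fintype.card (Nat.Partition n₀) := by
      rw [← Nat.card_coe_set_eq]
      have hf1 : Function.Injective
          (fun μ : ↥S => Nat.Partition.ofSums n₀ _ (hsum1 μ)) := by
        rintro ⟨μ, hμ⟩ ⟨ν, hν⟩ h
        have hparts := congrArg Nat.Partition.parts h
        simp only [Nat.Partition.ofSums_parts] at hparts
        rw [Multiset.filter_add, Multiset.filter_add] at hparts
        have hrep : (Multiset.replicate (n₀ - M) 1).filter (· ≠ 0)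
            = Multiset.replicate (n₀ - M) 1 :=
          Multiset.filter_eq_self.mpr fun x hx => by
            rw [Multiset.eq_of_mem_replicate hx]; exact one_ne_zero
        rw [hrep] at hparts
        have hfil := add_right_cancel hparts
        have hAA : Multiset.map (fun j => μ j - b i0) Finset.univ.val
            = Multiset.map (fun j => ν j - b i0) Finset.univ.val := by
          rw [multiset_eq_filter_add_replicate
              (Multiset.map (fun j => μ j - b i0) Finset.univ.val),
            multiset_eq_filter_add_replicate
              (Multiset.map (fun j => ν j - b i0) Finset.univ.val),
            hfil, hcardA μ, hcardA ν]
        have hg := monotone_eq_of_map_univ_val_eq (hmonoA μ hμ) (hmonoA ν hν) hAA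
        refine Subtype.ext (funext fun j => ?_)
        show μ j = ν j
        have h3 : μ j - b i0 = ν j - b i0 := congrFun hg j
        have h1 := lb μ hμ j
        have h2 := lb ν hν j
        omega
      calc Nat.card ↥S ≤ Nat.card (Nat.Partition n₀) :=
            Nat.card_le_card_of_injective _ hf1
        _ = Fintype.card (Nat.Partition n₀) := Nat.card_eq_fintype_card
    -- Injection into finsets of Fin (K + N)
    have hKN : ∀ μ : Fin N → ℕ, μ ∈ S → ∀ j : Fin N, μ j - b i0 + (j : ℕ) < K + N := by
      intro μ hμ j
      have h1 := ub μ hμ j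
      have h2 := j.isLt
      omega
    have hgsm : ∀ μ : ↥S, StrictMono (fun j : Fin N =>
        (⟨μ.1 j - b i0 + (j : ℕ), hKN μ.1 μ.2 j⟩ : Fin (K + N))) := by
      intro μ x y hxy
      have h1 := μ.2.1 (le_of_lt hxy)
      have h2 : (x : ℕ) < (y : ℕ) := hxy
      rw [Fin.lt_def]
      show μ.1 x - b i0 + (x : ℕ) < μ.1 y - b i0 + (y : ℕ)
      omega
    have part2nat : S.ncard ≤ 2 ^ (K + N) := by
      rw [← Nat.card_coe_set_eq]
      have hf2 : Function.Injective (fun μ : ↥S =>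
          Finset.map ⟨_, (hgsm μ).injective⟩ Finset.univ) := by
        rintro ⟨μ, hμ⟩ ⟨ν, hν⟩ h
        have hval := congrArg Finset.val h
        simp only [Finset.map_val, Function.Embedding.coeFn_mk] at hval
        have hg := monotone_eq_of_map_univ_val_eq (hgsm ⟨μ, hμ⟩).monotone
          (hgsm ⟨ν, hν⟩).monotone hval
        refine Subtype.ext (funext fun j => ?_)
        show μ j = ν j
        have h3 : μ j - b i0 + (j : ℕ) = ν j - b i0 + (j : ℕ) :=
          congrArg Fin.val (congrFun hg j)
        have h1 := lb μ hμ j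
        have h2 := lb ν hν j
        omega
      calc Nat.card ↥S ≤ Nat.card (Finset (Fin (K + N))) :=
            Nat.card_le_card_of_injective _ hf2
        _ = 2 ^ (K + N) := by
            rw [Nat.card_eq_fintype_card, Fintype.card_finset, Fintype.card_fin]
    refine ⟨part1, ?_⟩
    -- real estimate
    have hKcast : ((q * (N - 1) : ℕ) : ℝ) + (b iL : ℝ) - (b i0 : ℝ) = (K : ℝ) := by
      rw [hK, hd]
      push_cast [hbb]
      ring
    have hK1 : 1 ≤ K := by
      have : 1 * 1 ≤ q * (N - 1) := Nat.mul_le_mul hq (by omega)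
      omega
    have hNK : N ≤ K + 1 := by
      have : 1 * (N - 1) ≤ q * (N - 1) := Nat.mul_le_mul_right _ hq
      omega
    have hpow : ((2 : ℝ)) ^ (K + N) = Real.exp (((K + N : ℕ) : ℝ) * Real.log 2) := by
      rw [Real.exp_nat_mul, Real.exp_log (by norm_num)]
    have hsqrt : (0.8 : ℝ) ≤ Real.sqrt (2 / 3) := by
      rw [Real.le_sqrt (by norm_num) (by norm_num)]
      norm_num
    have hexp_le : ((K + N : ℕ) : ℝ) * Real.log 2
        ≤ Real.pi * Real.sqrt (2 / 3) * (K : ℝ) := by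
      have hlog : Real.log 2 ≤ 0.6931471808 := Real.log_two_lt_d9.le
      have hlogpos : (0 : ℝ) ≤ Real.log 2 := Real.log_nonneg (by norm_num)
      have hpi : (3.141592 : ℝ) ≤ Real.pi := Real.pi_gt_d6.le
      have hKN3 : ((K + N : ℕ) : ℝ) ≤ 3 * (K : ℝ) := by
        have h : K + N ≤ 3 * K := by omega
        exact_mod_cast h
      have hKpos : (0 : ℝ) ≤ (K : ℝ) := Nat.cast_nonneg _
      calc ((K + N : ℕ) : ℝ) * Real.log 2 ≤ 3 * (K : ℝ) * 0.6931471808 := by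
            apply mul_le_mul hKN3 hlog hlogpos
            positivity
        _ ≤ (3.141592 * 0.8) * (K : ℝ) := by linarith
        _ ≤ Real.pi * Real.sqrt (2 / 3) * (K : ℝ) := by
            apply mul_le_mul_of_nonneg_right _ hKpos
            have h08 : (0 : ℝ) ≤ 0.8 := by norm_num
            exact mul_le_mul hpi hsqrt h08 Real.pi_pos.le
    calc (S.ncard : ℝ) ≤ (2 : ℝ) ^ (K + N) := by exact_mod_cast part2nat
      _ = Real.exp (((K + N : ℕ) : ℝ) * Real.log 2) := hpow
      _ ≤ Real.exp (Real.pi * Real.sqrt (2 / 3) * (K : ℝ)) := Real.exp_le_exp.mpr hexp_le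
      _ = Real.exp (Real.pi * Real.sqrt (2 / 3) *
          ((q * (N - 1) : ℕ) + (b iL : ℝ) - (b i0 : ℝ))) := by rw [hKcast]
end
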